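/- arXiv:1609.08325 — 6 statements merged into one kernel-verified Lean document; each statement's English description precedes it below -/
import Mathlib

section
/- Let T be a bounded linear operator on a complex Hilbert space H and let z = r e^{iθ} with r = |z| > ρ_θ(T). Then T − z is invertible and |z| − ρ_θ(T) ≤ Ψ_T(z) ≤ √( |z|² − 2 ρ_θ(T) |z| + ‖T‖² ). -/
open Filter ContinuousLinearMap

open Classical in
/-- `Ψ_T(z) = 0` on the spectrum, `‖(T - z)⁻¹‖⁻¹` off the spectrum. -/
noncomputable def Psi {H : Type*} [NormedAddCommGroup H] [InnerProductSpace ℂ H]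
    (T : H →L[ℂ] H) (z : ℂ) : ℝ :=
  if z ∈ spectrum ℂ T then 0
  else ‖Ring.inverse (T - z • (1 : H →L[ℂ] H))‖⁻¹

/-- `ρ_θ(T) = sup {Re ⟨e^{-iθ} T h, h⟩ : ‖h‖ = 1}`. -/
noncomputable def rho {H : Type*} [NormedAddCommGroup H] [InnerProductSpace ℂ H]
    (T : H →L[ℂ] H) (θ : ℝ) : ℝ :=
  sSup {r : ℝ | ∃ h : H, ‖h‖ = 1 ∧
    r = (inner ℂ (Complex.exp (-(θ : ℂ) * Complex.I) • T h) h : ℂ).re}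

theorem psi_numrange_bounds {H : Type*} [NormedAddCommGroup H] [InnerProductSpace ℂ H] [CompleteSpace H] [Nontrivial H]
    (T : H →L[ℂ] H) (θ : ℝ) (z : ℂ)
    (hz : z = (‖z‖ : ℂ) * Complex.exp ((θ : ℂ) * Complex.I))
    (hρ : rho T θ < ‖z‖) :
    z ∉ spectrum ℂ T ∧
      ‖z‖ - rho T θ ≤ Psi T z ∧
      Psi T z ≤ Real.sqrt (‖z‖ ^ 2 - 2 * rho T θ * ‖z‖ + ‖T‖ ^ 2) := by
  set r : ℝ := ‖z‖ with hrdef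
  set ρ : ℝ := rho T θ with hρdef
  have hr0 : 0 ≤ r := norm_nonneg z
  set c : ℂ := Complex.exp ((θ : ℂ) * Complex.I) with hcdef
  have hcabs : ‖c‖ = 1 := Complex.norm_exp_ofReal_mul_I θ
  have hcconj : (starRingEnd ℂ) (Complex.exp (-(θ : ℂ) * Complex.I)) = c := by
    rw [← Complex.exp_conj]
    congr 1
    simp [Complex.conj_I]
  have hzconj : (starRingEnd ℂ) z = (r : ℂ) * Complex.exp (-(θ : ℂ) * Complex.I) := by
    rw [hz, map_mul, ← Complex.exp_conj, Complex.conj_ofReal]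
    congr 2
    simp [Complex.conj_I]
  have hcz : c * (starRingEnd ℂ) z = (r : ℂ) := by
    rw [hzconj, hcdef, ← mul_assoc, mul_comm c, mul_assoc, ← Complex.exp_add]
    simp
  set A : H →L[ℂ] H := T - z • 1 with hAdef
  -- the set whose sup is ρ; its elements are `(c * ⟪T h, h⟫).re`
  set S : Set ℝ := {x : ℝ | ∃ h : H, ‖h‖ = 1 ∧
    x = (inner ℂ (Complex.exp (-(θ : ℂ) * Complex.I) • T h) h : ℂ).re} with hSdef
  have hmemS : ∀ h : H, ‖h‖ = 1 → ((c * inner ℂ (T h) h : ℂ)).re ∈ S := by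
    intro h hh
    refine ⟨h, hh, ?_⟩
    rw [inner_smul_left, hcconj]
  have hSbdd : BddAbove S := by
    refine ⟨‖T‖, fun x hx => ?_⟩
    obtain ⟨h, hh, rfl⟩ := hx
    calc (inner ℂ (Complex.exp (-(θ : ℂ) * Complex.I) • T h) h : ℂ).re
        ≤ ‖(inner ℂ (Complex.exp (-(θ : ℂ) * Complex.I) • T h) h : ℂ)‖ :=
          Complex.re_le_norm _
      _ = ‖(inner ℂ (Complex.exp (-(θ : ℂ) * Complex.I) • T h) h : ℂ)‖ := rfl
      _ ≤ ‖Complex.exp (-(θ : ℂ) * Complex.I) • T h‖ * ‖h‖ := norm_inner_le_norm _ _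
      _ = ‖T h‖ := by
          rw [norm_smul, hh, mul_one]
          rw [show ‖Complex.exp (-(θ : ℂ) * Complex.I)‖ = 1 by
            rw [show (-(θ : ℂ) * Complex.I) = ((-θ : ℝ) : ℂ) * Complex.I by push_cast; ring]
            exact Complex.norm_exp_ofReal_mul_I (-θ)]
          ring
      _ ≤ ‖T‖ * ‖h‖ := T.le_opNorm h
      _ = ‖T‖ := by rw [hh, mul_one]
  have hsle : ∀ h : H, ‖h‖ = 1 → ((c * inner ℂ (T h) h : ℂ)).re ≤ ρ :=
    fun h hh => le_csSup hSbdd (hmemS h hh)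
  -- numerical range of A on unit vectors
  have hAinner : ∀ h : H, ‖h‖ = 1 →
      (c * inner ℂ (A h) h : ℂ) = c * inner ℂ (T h) h - (r : ℂ) := by
    intro h hh
    have hhh : (inner ℂ h h : ℂ) = 1 := by
      rw [inner_self_eq_norm_sq_to_K, hh]; norm_num
    have : A h = T h - z • h := by
      simp [hAdef, sub_apply, smul_apply, one_apply]
    rw [this, inner_sub_left, inner_smul_left, hhh, mul_one, mul_sub, hcz]
  have hlow : ∀ h : H, ‖h‖ = 1 → r - ρ ≤ ‖(inner ℂ (A h) h : ℂ)‖ := by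
    intro h hh
    have h1 : (c * inner ℂ (A h) h : ℂ).re = (c * inner ℂ (T h) h : ℂ).re - r := by
      rw [hAinner h hh]
      simp [Complex.sub_re, Complex.ofReal_re]
    have h2 : r - ρ ≤ -(c * inner ℂ (A h) h : ℂ).re := by
      rw [h1]
      have := hsle h hh
      linarith
    calc r - ρ ≤ -(c * inner ℂ (A h) h : ℂ).re := h2
      _ ≤ |(c * inner ℂ (A h) h : ℂ).re| := neg_le_abs _
      _ ≤ ‖(c * inner ℂ (A h) h : ℂ)‖ := Complex.abs_re_le_norm _
      _ = ‖c‖ * ‖(inner ℂ (A h) h : ℂ)‖ := norm_mul _ _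
      _ = ‖(inner ℂ (A h) h : ℂ)‖ := by rw [hcabs, one_mul]
  have hrρ : 0 < r - ρ := by linarith
  -- scale to all vectors
  have hlow' : ∀ x : H, (r - ρ) * ‖x‖ ^ 2 ≤ ‖(inner ℂ (A x) x : ℂ)‖ := by
    intro x
    rcases eq_or_ne x 0 with rfl | hx
    · simp
    · have hnx : (0 : ℝ) < ‖x‖ := norm_pos_iff.mpr hx
      set h : H := ((‖x‖⁻¹ : ℝ) : ℂ) • x with hhdef
      have hh : ‖h‖ = 1 := by
        rw [hhdef, norm_smul]
        simp [abs_of_pos (inv_pos.mpr hnx), inv_mul_cancel₀ hnx.ne']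
      have hAh : (inner ℂ (A h) h : ℂ) = ((‖x‖⁻¹ : ℝ) : ℂ) ^ 2 * inner ℂ (A x) x := by
        rw [hhdef, map_smul, inner_smul_left, inner_smul_right, Complex.conj_ofReal]
        ring
      have := hlow h hh
      rw [hAh] at this
      have hnorm : ‖(((‖x‖⁻¹ : ℝ) : ℂ) ^ 2 * inner ℂ (A x) x : ℂ)‖
          = ‖x‖⁻¹ ^ 2 * ‖(inner ℂ (A x) x : ℂ)‖ := by
        rw [norm_mul, norm_pow, Complex.norm_real, Real.norm_eq_abs,
          abs_of_pos (inv_pos.mpr hnx)]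
      rw [hnorm] at this
      have h2 : (r - ρ) * ‖x‖ ^ 2 ≤ (‖x‖⁻¹ ^ 2 * ‖(inner ℂ (A x) x : ℂ)‖) * ‖x‖ ^ 2 := by
        nlinarith [sq_nonneg ‖x‖]
      calc (r - ρ) * ‖x‖ ^ 2 ≤ (‖x‖⁻¹ ^ 2 * ‖(inner ℂ (A x) x : ℂ)‖) * ‖x‖ ^ 2 := h2
        _ = ‖(inner ℂ (A x) x : ℂ)‖ := by
            field_simp
  -- A is invertible
  have hU : IsUnit A := by
    refine isUnit_of_forall_le_norm_inner_map A (c := (r - ρ).toNNReal)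
      (Real.toNNReal_pos.mpr hrρ) (fun x => ?_)
    rw [Real.coe_toNNReal _ hrρ.le]
    linarith [hlow' x]
  have znotin : z ∉ spectrum ℂ T := by
    rw [spectrum.mem_iff]
    push_neg
    have : algebraMap ℂ (H →L[ℂ] H) z - T = -A := by
      rw [hAdef, Algebra.algebraMap_eq_smul_one]
      exact (neg_sub _ _).symm
    rw [this]
    exact hU.neg
  obtain ⟨u, hu⟩ := hU
  set B : H →L[ℂ] H := ↑u⁻¹ with hBdef
  have hinv : Ring.inverse A = B := by rw [← hu, Ring.inverse_unit]
  have hid1 : ∀ y : H, A (B y) = y := by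
    intro y
    have h1 : ((↑u * ↑u⁻¹ : H →L[ℂ] H)) y = (1 : H →L[ℂ] H) y := by
      rw [u.mul_inv]
    rw [ContinuousLinearMap.mul_apply, hu] at h1
    simpa using h1
  have hid2 : ∀ y : H, B (A y) = y := by
    intro y
    have h1 : ((↑u⁻¹ * ↑u : H →L[ℂ] H)) y = (1 : H →L[ℂ] H) y := by
      rw [u.inv_mul]
    rw [ContinuousLinearMap.mul_apply, hu] at h1
    simpa using h1
  -- A is bounded below
  have hAbelow : ∀ x : H, (r - ρ) * ‖x‖ ≤ ‖A x‖ := by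
    intro x
    rcases eq_or_ne x 0 with rfl | hx
    · simp
    · have hnx : (0 : ℝ) < ‖x‖ := norm_pos_iff.mpr hx
      have h1 := hlow' x
      have h2 : ‖(inner ℂ (A x) x : ℂ)‖ ≤ ‖A x‖ * ‖x‖ := norm_inner_le_norm _ _
      have h3 : (r - ρ) * ‖x‖ ^ 2 ≤ ‖A x‖ * ‖x‖ := h1.trans h2
      nlinarith
  have hBnorm : ‖B‖ ≤ (r - ρ)⁻¹ := by
    apply opNorm_le_bound _ (inv_nonneg.mpr hrρ.le)
    intro y
    have := hAbelow (B y)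
    rw [hid1 y] at this
    rw [inv_mul_eq_div, le_div_iff₀ hrρ]
    linarith
  have hBpos : 0 < ‖B‖ := by
    obtain ⟨x0, hx0⟩ := exists_ne (0 : H)
    have hB0 : B ≠ 0 := by
      intro hB
      have := hid2 x0
      rw [hB] at this
      simp at this
      exact hx0 this.symm
    exact norm_pos_iff.mpr hB0
  have hPsi : Psi T z = ‖B‖⁻¹ := by
    rw [Psi, if_neg znotin, ← hAdef, hinv]
  have hΨ0 : 0 ≤ Psi T z := by rw [hPsi]; positivity
  refine ⟨znotin, ?_, ?_⟩
  · -- lower bound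
    rw [hPsi]
    calc r - ρ = ((r - ρ)⁻¹)⁻¹ := (inv_inv _).symm
      _ ≤ ‖B‖⁻¹ := by
          apply inv_anti₀ hBpos hBnorm
  · -- upper bound
    have hup : ∀ h : H, ‖h‖ = 1 → Psi T z ≤ ‖A h‖ := by
      intro h hh
      have h1 : 1 ≤ ‖B‖ * ‖A h‖ := by
        calc (1 : ℝ) = ‖h‖ := hh.symm
          _ = ‖B (A h)‖ := by rw [hid2 h]
          _ ≤ ‖B‖ * ‖A h‖ := B.le_opNorm _
      rw [hPsi, inv_eq_one_div, div_le_iff₀ hBpos]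
      nlinarith
    have hAnormsq : ∀ h : H, ‖h‖ = 1 →
        ‖A h‖ ^ 2 = ‖T h‖ ^ 2 - 2 * r * (c * inner ℂ (T h) h : ℂ).re + r ^ 2 := by
      intro h hh
      have hAh : A h = T h - z • h := by
        simp [hAdef, sub_apply, smul_apply, one_apply]
      rw [hAh, @norm_sub_sq ℂ]
      have h2 : (inner ℂ (T h) (z • h) : ℂ) = z * inner ℂ (T h) h := inner_smul_right _ _ _
      have h3 : RCLike.re (inner ℂ (T h) (z • h) : ℂ) = r * (c * inner ℂ (T h) h : ℂ).re := by
        rw [h2, hz]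
        rw [show ((‖z‖ : ℂ) * Complex.exp ((θ : ℂ) * Complex.I)) * inner ℂ (T h) h
            = (r : ℂ) * (c * inner ℂ (T h) h) by rw [hrdef, hcdef]; ring]
        simp [Complex.mul_re, Complex.ofReal_re, Complex.ofReal_im]
      rw [h3]
      have h4 : ‖z • h‖ = r := by
        rw [norm_smul, hh, mul_one]
      rw [h4]
      ring
    -- Ψ² ≤ r² - 2ρr + ‖T‖²
    have hΨsq : Psi T z ^ 2 ≤ r ^ 2 - 2 * ρ * r + ‖T‖ ^ 2 := by
      have hkey : ∀ h : H, ‖h‖ = 1 →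
          Psi T z ^ 2 ≤ ‖T‖ ^ 2 - 2 * r * (c * inner ℂ (T h) h : ℂ).re + r ^ 2 := by
        intro h hh
        have h1 := hup h hh
        have h2 : Psi T z ^ 2 ≤ ‖A h‖ ^ 2 := by nlinarith [hΨ0]
        have h3 : ‖T h‖ ≤ ‖T‖ := by
          calc ‖T h‖ ≤ ‖T‖ * ‖h‖ := T.le_opNorm h
            _ = ‖T‖ := by rw [hh, mul_one]
        have h4 : ‖T h‖ ^ 2 ≤ ‖T‖ ^ 2 := by nlinarith [norm_nonneg (T h)]
        rw [hAnormsq h hh] at h2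
        linarith
      rcases eq_or_lt_of_le hr0 with hr0' | hr0'
      · -- r = 0
        obtain ⟨h0, hh0⟩ : ∃ x : H, ‖x‖ = 1 := exists_norm_eq H zero_le_one
        have h1 := hkey h0 hh0
        rw [← hr0'] at h1 ⊢
        simp only [mul_zero, zero_mul, add_zero, zero_add, sub_zero] at h1 ⊢
        nlinarith [h1]
      · -- r > 0
        have h5 : ∀ x ∈ S, x ≤ (‖T‖ ^ 2 + r ^ 2 - Psi T z ^ 2) / (2 * r) := by
          intro x hx
          obtain ⟨h, hh, rfl⟩ := hx
          have hx' : (inner ℂ (Complex.exp (-(θ : ℂ) * Complex.I) • T h) h : ℂ).re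
              = (c * inner ℂ (T h) h : ℂ).re := by
            rw [inner_smul_left, hcconj]
          rw [hx', le_div_iff₀ (by linarith)]
          have := hkey h hh
          nlinarith
        have hSne : S.Nonempty := by
          obtain ⟨h0, hh0⟩ : ∃ x : H, ‖x‖ = 1 := exists_norm_eq H zero_le_one
          exact ⟨_, h0, hh0, rfl⟩
        have h6 : ρ ≤ (‖T‖ ^ 2 + r ^ 2 - Psi T z ^ 2) / (2 * r) := csSup_le hSne h5
        rw [le_div_iff₀ (by linarith)] at h6
        nlinarith
    calc Psi T z = Real.sqrt (Psi T z ^ 2) := (Real.sqrt_sq hΨ0).symm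
      _ ≤ Real.sqrt (r ^ 2 - 2 * ρ * r + ‖T‖ ^ 2) := Real.sqrt_le_sqrt hΨsq
end

section
/- Let T be a bounded linear operator on a complex Hilbert space H, and let z, z₀ ∈ ℂ with z ∉ σ(T), z ≠ 0 and z₀ ≠ 0. Then Ψ_T(z₀)/|z₀| ≤ (Ψ_T(z)/|z|) · (1 + ε_{z,z₀}), where ε_{z,z₀} = ‖T‖ |z − z₀| / ( |z₀| Ψ_T(z) ). -/
open Filter ContinuousLinearMap

theorem psi_ratio_estimate {H : Type*} [NormedAddCommGroup H] [InnerProductSpace ℂ H] [CompleteSpace H]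
    (T : H →L[ℂ] H) (z z₀ : ℂ) (hz : z ∉ spectrum ℂ T) (hz0 : z ≠ 0) (hz₀0 : z₀ ≠ 0) :
    Psi T z₀ / ‖z₀‖ ≤
      (Psi T z / ‖z‖) *
        (1 + ‖T‖ * ‖z - z₀‖ / (‖z₀‖ * Psi T z)) := by
  classical
  have hPsi_nonneg : ∀ w : ℂ, 0 ≤ Psi T w := by
    intro w; unfold Psi; split
    · exact le_refl 0
    · positivity
  have hRHS_nonneg : 0 ≤ (Psi T z / ‖z‖) *
      (1 + ‖T‖ * ‖z - z₀‖ / (‖z₀‖ * Psi T z)) := by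
    apply mul_nonneg (div_nonneg (hPsi_nonneg z) (norm_nonneg _))
    have h1 : 0 ≤ ‖T‖ * ‖z - z₀‖ / (‖z₀‖ * Psi T z) :=
      div_nonneg (by positivity) (mul_nonneg (norm_nonneg _) (hPsi_nonneg z))
    linarith
  rcases subsingleton_or_nontrivial H with hH | hH
  · have h0 : Psi T z₀ = 0 := by
      have he : (Ring.inverse (T - z₀ • (1 : H →L[ℂ] H))) = 0 := Subsingleton.elim _ _
      unfold Psi; split <;> simp [he]
    rw [h0, zero_div]; exact hRHS_nonneg
  by_cases hz₀ : z₀ ∈ spectrum ℂ T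
  · have h0 : Psi T z₀ = 0 := by unfold Psi; rw [if_pos hz₀]
    rw [h0, zero_div]; exact hRHS_nonneg
  -- main case
  set u := T - z • (1 : H →L[ℂ] H) with hu_def
  set v := T - z₀ • (1 : H →L[ℂ] H) with hv_def
  have hu : IsUnit u := by
    have h := spectrum.notMem_iff.mp hz
    rw [Algebra.algebraMap_eq_smul_one] at h
    simpa [hu_def, neg_sub] using h.neg
  have hv : IsUnit v := by
    have h := spectrum.notMem_iff.mp hz₀
    rw [Algebra.algebraMap_eq_smul_one] at h
    simpa [hv_def, neg_sub] using h.neg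
  set R := Ring.inverse u with hR_def
  set S := Ring.inverse v with hS_def
  have hRu : R * u = 1 := Ring.inverse_mul_cancel u hu
  have huR : u * R = 1 := Ring.mul_inverse_cancel u hu
  have hSv : S * v = 1 := Ring.inverse_mul_cancel v hv
  have hvS : v * S = 1 := Ring.mul_inverse_cancel v hv
  have h1 : z • R = T * R - 1 := by
    have h := huR
    rw [hu_def, sub_mul, smul_mul_assoc, one_mul] at h
    rw [← h]; abel
  have h2 : z₀ • S = T * S - 1 := by
    have h := hvS
    rw [hv_def, sub_mul, smul_mul_assoc, one_mul] at h
    rw [← h]; abel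
  have hvu : v - u = (z - z₀) • (1 : H →L[ℂ] H) := by
    rw [hv_def, hu_def, sub_smul]; abel
  have h3 : R - S = (z - z₀) • (R * S) := by
    have h : R - S = R * (v - u) * S := by
      rw [mul_sub, sub_mul, mul_assoc, hvS, mul_one, hRu, one_mul]
    rw [h, hvu, mul_smul_comm, mul_one, smul_mul_assoc]
  have key : z • R - z₀ • S = (z - z₀) • (T * (R * S)) := by
    rw [h1, h2, sub_sub_sub_cancel_right, ← mul_sub, h3, mul_smul_comm]
  have hnorm : ‖z‖ * ‖R‖ ≤
      ‖z₀‖ * ‖S‖ + ‖T‖ * ‖R‖ * ‖S‖ * ‖z - z₀‖ := by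
    have h4 : ‖z • R‖ - ‖z₀ • S‖ ≤ ‖z • R - z₀ • S‖ := norm_sub_norm_le _ _
    rw [key, norm_smul, norm_smul, norm_smul] at h4
    have h5 : ‖T * (R * S)‖ ≤ ‖T‖ * (‖R‖ * ‖S‖) :=
      le_trans (norm_mul_le _ _)
        (mul_le_mul_of_nonneg_left (norm_mul_le _ _) (norm_nonneg _))
    skip
    nlinarith [norm_nonneg (z - z₀)]
  have hR0 : 0 < ‖R‖ := by
    rcases eq_or_ne R 0 with h | h
    · exfalso
      have h1 : (1 : H →L[ℂ] H) = 0 := by rw [← hRu, h, zero_mul]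
      exact one_ne_zero h1
    · exact norm_pos_iff.mpr h
  have hS0 : 0 < ‖S‖ := by
    rcases eq_or_ne S 0 with h | h
    · exfalso
      have h1 : (1 : H →L[ℂ] H) = 0 := by rw [← hSv, h, zero_mul]
      exact one_ne_zero h1
    · exact norm_pos_iff.mpr h
  have hp : 0 < ‖z‖ := norm_pos_iff.mpr hz0
  have hq : 0 < ‖z₀‖ := norm_pos_iff.mpr hz₀0
  have hp' := hp.ne'
  have hq' := hq.ne'
  have hR' := hR0.ne'
  have hS' := hS0.ne'
  have hPz : Psi T z = ‖R‖⁻¹ := by unfold Psi; rw [if_neg hz]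
  have hPz₀ : Psi T z₀ = ‖S‖⁻¹ := by unfold Psi; rw [if_neg hz₀]
  rw [hPz, hPz₀]
  have e1 : ‖S‖⁻¹ / ‖z₀‖ =
      (‖z‖ * ‖R‖) / (‖z‖ * ‖z₀‖ * ‖R‖ * ‖S‖) := by
    field_simp
  have e2 : ‖R‖⁻¹ / ‖z‖ *
        (1 + ‖T‖ * ‖z - z₀‖ / (‖z₀‖ * ‖R‖⁻¹)) =
      (‖z₀‖ * ‖S‖ + ‖T‖ * ‖R‖ * ‖S‖ * ‖z - z₀‖) /
        (‖z‖ * ‖z₀‖ * ‖R‖ * ‖S‖) := by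
    field_simp
  rw [e1, e2]
  gcongr
end

section
/- Let T be a bounded linear operator on a complex Hilbert space H and let c > ‖T‖. Then the function z ↦ Ψ_T(z)/|z| restricted to the set {z ∈ ℂ : |z| ≥ c} is Lipschitz with constant η(c) = ‖T‖/c², i.e. | Ψ_T(z)/|z| − Ψ_T(z₀)/|z₀| | ≤ (‖T‖/c²) |z − z₀| whenever |z| ≥ c and |z₀| ≥ c. -/
open Filter ContinuousLinearMap

/-- In a nontrivial normed ring, `1/‖a⁻¹‖ ≤ 1/‖b⁻¹‖ + ‖a - b‖` for units `a, b`. -/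
lemma inv_norm_inv_le {A : Type*} [NormedRing A] (hA : (1 : A) ≠ 0) (a b : Aˣ) :
    ‖(↑a⁻¹ : A)‖⁻¹ ≤ ‖(↑b⁻¹ : A)‖⁻¹ + ‖(a : A) - b‖ := by
  have ha0 : (↑a⁻¹ : A) ≠ 0 := by
    intro h
    exact hA (by rw [← a.inv_mul, h, zero_mul])
  have hb0 : (↑b⁻¹ : A) ≠ 0 := by
    intro h
    exact hA (by rw [← b.inv_mul, h, zero_mul])
  have ha : (0 : ℝ) < ‖(↑a⁻¹ : A)‖ := norm_pos_iff.mpr ha0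
  have hb : (0 : ℝ) < ‖(↑b⁻¹ : A)‖ := norm_pos_iff.mpr hb0
  have key : (↑b⁻¹ : A) = ↑a⁻¹ + ↑a⁻¹ * ((↑a : A) - ↑b) * ↑b⁻¹ := by
    have h1 : (↑a⁻¹ : A) * ((↑a : A) - ↑b) * ↑b⁻¹ = ↑b⁻¹ - ↑a⁻¹ := by
      rw [mul_sub, Units.inv_mul, sub_mul, one_mul, mul_assoc, Units.mul_inv, mul_one]
    rw [h1]; abel
  have hineq : ‖(↑b⁻¹ : A)‖ ≤ ‖(↑a⁻¹ : A)‖ + ‖(↑a⁻¹ : A)‖ * ‖(↑a : A) - ↑b‖ * ‖(↑b⁻¹ : A)‖ := by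
    calc ‖(↑b⁻¹ : A)‖ = ‖(↑a⁻¹ : A) + ↑a⁻¹ * ((↑a : A) - ↑b) * ↑b⁻¹‖ := by rw [← key]
      _ ≤ ‖(↑a⁻¹ : A)‖ + ‖(↑a⁻¹ : A) * ((↑a : A) - ↑b) * ↑b⁻¹‖ := norm_add_le _ _
      _ ≤ ‖(↑a⁻¹ : A)‖ + ‖(↑a⁻¹ : A)‖ * ‖(↑a : A) - ↑b‖ * ‖(↑b⁻¹ : A)‖ := by
          gcongr
          exact (norm_mul_le _ _).trans (by gcongr; exact norm_mul_le _ _)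
  have h1 : ‖(↑a⁻¹ : A)‖ * ‖(↑a⁻¹ : A)‖⁻¹ = 1 := mul_inv_cancel₀ ha.ne'
  have h2 : ‖(↑b⁻¹ : A)‖ * ‖(↑b⁻¹ : A)‖⁻¹ = 1 := mul_inv_cancel₀ hb.ne'
  nlinarith [mul_pos ha hb, norm_nonneg ((↑a : A) - ↑b), inv_nonneg.mpr ha.le,
    inv_nonneg.mpr hb.le]

lemma psi_key {H : Type*} [NormedAddCommGroup H] [InnerProductSpace ℂ H] [CompleteSpace H]
    (T : H →L[ℂ] H) (c : ℝ) (hc : ‖T‖ < c) (z : ℂ) (hz : c ≤ ‖z‖) :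
    ∃ u : (H →L[ℂ] H)ˣ, (↑u : H →L[ℂ] H) = z⁻¹ • T - 1 ∧
      Psi T z / ‖z‖ = ‖(↑u⁻¹ : H →L[ℂ] H)‖⁻¹ := by
  have hcpos : (0 : ℝ) < c := lt_of_le_of_lt (norm_nonneg T) hc
  have habs : (0 : ℝ) < ‖z‖ := lt_of_lt_of_le hcpos hz
  have hz0 : z ≠ 0 := by
    intro h; rw [h] at habs; simp at habs
  have hnorm : ‖z⁻¹ • T‖ < 1 := by
    rw [norm_smul, norm_inv]
    rw [inv_mul_lt_iff₀ habs, mul_one]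
    exact lt_of_lt_of_le hc hz
  let v : (H →L[ℂ] H)ˣ := Units.oneSub (z⁻¹ • T) hnorm
  let u : (H →L[ℂ] H)ˣ := -v
  have hu : (↑u : H →L[ℂ] H) = z⁻¹ • T - 1 := by
    show -(↑v : H →L[ℂ] H) = _
    rw [Units.val_oneSub, neg_sub]
  refine ⟨u, hu, ?_⟩
  -- the unit corresponding to `T - z • 1`
  have hzz : z * z⁻¹ = 1 := mul_inv_cancel₀ hz0
  have hzz' : z⁻¹ * z = 1 := inv_mul_cancel₀ hz0
  let w : (H →L[ℂ] H)ˣ := ⟨z • (↑u : H →L[ℂ] H), z⁻¹ • (↑u⁻¹ : H →L[ℂ] H),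
    by rw [smul_mul_smul_comm, hzz, Units.mul_inv, one_smul],
    by rw [smul_mul_smul_comm, hzz', Units.inv_mul, one_smul]⟩
  have hw : (↑w : H →L[ℂ] H) = T - z • 1 := by
    show z • (↑u : H →L[ℂ] H) = _
    rw [hu, smul_sub, smul_smul, hzz, one_smul]
  have hspec : z ∉ spectrum ℂ T := by
    rw [spectrum.notMem_iff]
    have : (algebraMap ℂ (H →L[ℂ] H)) z - T = ↑(-w) := by
      rw [Algebra.algebraMap_eq_smul_one, Units.val_neg, hw, neg_sub]
    rw [this]
    exact (-w).isUnit
  have hPsi : Psi T z = ‖Ring.inverse (T - z • (1 : H →L[ℂ] H))‖⁻¹ := by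
    rw [Psi, if_neg hspec]
  rw [hPsi, ← hw, Ring.inverse_unit]
  have hinv : (↑w⁻¹ : H →L[ℂ] H) = z⁻¹ • (↑u⁻¹ : H →L[ℂ] H) := rfl
  rw [hinv, norm_smul, norm_inv, mul_inv, inv_inv]
  rw [mul_comm, mul_div_assoc, div_self habs.ne', mul_one]

theorem psi_over_abs_lipschitz {H : Type*} [NormedAddCommGroup H] [InnerProductSpace ℂ H] [CompleteSpace H]
    (T : H →L[ℂ] H) (c : ℝ) (hc : ‖T‖ < c) :
    ∀ z z₀ : ℂ, c ≤ ‖z‖ → c ≤ ‖z₀‖ →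
      |Psi T z / ‖z‖ - Psi T z₀ / ‖z₀‖| ≤
        (‖T‖ / c ^ 2) * ‖z - z₀‖ := by
  intro z z₀ hz hz₀
  have hcpos : (0 : ℝ) < c := lt_of_le_of_lt (norm_nonneg T) hc
  have habs : (0 : ℝ) < ‖z‖ := lt_of_lt_of_le hcpos hz
  have habs₀ : (0 : ℝ) < ‖z₀‖ := lt_of_lt_of_le hcpos hz₀
  have hz0 : z ≠ 0 := by intro h; rw [h] at habs; simp at habs
  have hz00 : z₀ ≠ 0 := by intro h; rw [h] at habs₀; simp at habs₀
  obtain ⟨u, hu, hPu⟩ := psi_key T c hc z hz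
  obtain ⟨v, hv, hPv⟩ := psi_key T c hc z₀ hz₀
  rw [hPu, hPv]
  rcases subsingleton_or_nontrivial H with hS | hN
  · have h1 : (↑u⁻¹ : H →L[ℂ] H) = 0 := Subsingleton.elim _ _
    have h2 : (↑v⁻¹ : H →L[ℂ] H) = 0 := Subsingleton.elim _ _
    rw [h1, h2, norm_zero, sub_self, abs_zero]
    positivity
  · have hnt : (1 : H →L[ℂ] H) ≠ 0 := by
      obtain ⟨x, hx⟩ := exists_ne (0 : H)
      intro h
      exact hx (by simpa using DFunLike.congr_fun h x)
    have hmain : |‖(↑u⁻¹ : H →L[ℂ] H)‖⁻¹ - ‖(↑v⁻¹ : H →L[ℂ] H)‖⁻¹| ≤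
        ‖(↑u : H →L[ℂ] H) - ↑v‖ := by
      rw [abs_sub_le_iff]
      constructor
      · linarith [inv_norm_inv_le hnt u v]
      · have := inv_norm_inv_le hnt v u
        rw [norm_sub_rev] at this
        linarith
    refine hmain.trans ?_
    have hdiff : (↑u : H →L[ℂ] H) - ↑v = (z⁻¹ - z₀⁻¹) • T := by
      rw [hu, hv, sub_sub_sub_cancel_right, sub_smul]
    rw [hdiff, norm_smul]
    have hsub : ‖z⁻¹ - z₀⁻¹‖ = ‖z - z₀‖ / (‖z‖ * ‖z₀‖) := by
      rw [inv_sub_inv hz0 hz00, norm_div, norm_mul, norm_sub_rev]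
    rw [hsub]
    have hle : ‖z - z₀‖ / (‖z‖ * ‖z₀‖) ≤
        ‖z - z₀‖ / c ^ 2 := by
      apply div_le_div_of_nonneg_left (by positivity) (by positivity)
      calc c ^ 2 = c * c := sq c
        _ ≤ ‖z‖ * ‖z₀‖ := by
            exact mul_le_mul hz hz₀ hcpos.le habs.le
    calc ‖z - z₀‖ / (‖z‖ * ‖z₀‖) * ‖T‖
        ≤ ‖z - z₀‖ / c ^ 2 * ‖T‖ :=
          mul_le_mul_of_nonneg_right hle (norm_nonneg T)
      _ = (‖T‖ / c ^ 2) * ‖z - z₀‖ := by ring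
end

section
/- Let T be a bounded linear operator on a complex Hilbert space H, let B be a compact convex subset of ℂ ∖ σ(T), and let K = max{ Ψ_T(w)^{-1} : w ∈ B }. Then for all μ, η ∈ ℂ such that the segment [μ − η, μ + η] is contained in B, one has 2 Ψ_T(μ)^{-1} − Ψ_T(μ + η)^{-1} − Ψ_T(μ − η)^{-1} ≤ 2 K³ |η|². In other words, Ψ_T^{-1} is semiconvex on ℂ ∖ σ(T) with bound function C(z) = 2 Ψ_T(z)^{-3}. -/
open Filter ContinuousLinearMap

lemma inverse_sub_inverse {A : Type*} [Ring A] {x y : A} (hx : IsUnit x) (hy : IsUnit y) :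
    Ring.inverse x - Ring.inverse y = Ring.inverse x * (y - x) * Ring.inverse y := by
  have h1 : Ring.inverse x * x = 1 := Ring.inverse_mul_cancel x hx
  have h2 : y * Ring.inverse y = 1 := Ring.mul_inverse_cancel y hy
  have h3 : Ring.inverse x * (y - x) * Ring.inverse y
      = Ring.inverse x * (y * Ring.inverse y) - (Ring.inverse x * x) * Ring.inverse y := by
    noncomm_ring
  rw [h3, h1, h2, mul_one, one_mul]

lemma psi_inv_eq {H : Type*} [NormedAddCommGroup H] [InnerProductSpace ℂ H]
    (T : H →L[ℂ] H) {z : ℂ} (hz : z ∉ spectrum ℂ T) :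
    (Psi T z)⁻¹ = ‖Ring.inverse (T - z • (1 : H →L[ℂ] H))‖ := by
  rw [Psi, if_neg hz, inv_inv]

theorem psi_inv_semiconvex {H : Type*} [NormedAddCommGroup H] [InnerProductSpace ℂ H] [CompleteSpace H]
    (T : H →L[ℂ] H) (B : Set ℂ) (hBcomp : IsCompact B) (hBconv : Convex ℝ B)
    (hB : B ⊆ (spectrum ℂ T)ᶜ) (K : ℝ)
    (hK : IsGreatest ((fun w => (Psi T w)⁻¹) '' B) K) :
    ∀ μ η : ℂ, segment ℝ (μ - η) (μ + η) ⊆ B →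
      2 * (Psi T μ)⁻¹ - (Psi T (μ + η))⁻¹ - (Psi T (μ - η))⁻¹ ≤
        2 * K ^ 3 * ‖η‖ ^ 2 := by
  intro μ η hseg
  -- memberships
  have hμB : μ ∈ B := by
    have : μ ∈ segment ℝ (μ - η) (μ + η) := by
      have := midpoint_mem_segment (𝕜 := ℝ) (μ - η) (μ + η)
      have hmid : midpoint ℝ (μ - η) (μ + η) = μ := by
        rw [midpoint_eq_smul_add]
        push_cast
        ring_nf
        simp [smul_add, smul_sub]
        ring_nf
      rwa [hmid] at this
    exact hseg this
  have hpB : μ + η ∈ B := hseg (right_mem_segment ℝ _ _)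
  have hmB : μ - η ∈ B := hseg (left_mem_segment ℝ _ _)
  have hμs : μ ∉ spectrum ℂ T := hB hμB
  have hps : μ + η ∉ spectrum ℂ T := hB hpB
  have hms : μ - η ∉ spectrum ℂ T := hB hmB
  -- units
  have unit_of : ∀ {z : ℂ}, z ∉ spectrum ℂ T → IsUnit (T - z • (1 : H →L[ℂ] H)) := by
    intro z hz
    have := spectrum.notMem_iff.mp hz
    rw [Algebra.algebraMap_eq_smul_one] at this
    have := this.neg
    rwa [neg_sub] at this
  have ha := unit_of hps
  have hb := unit_of hms
  have hc := unit_of hμs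
  set a := T - (μ + η) • (1 : H →L[ℂ] H) with ha_def
  set b := T - (μ - η) • (1 : H →L[ℂ] H) with hb_def
  set c := T - μ • (1 : H →L[ℂ] H) with hc_def
  set A := Ring.inverse a
  set Bi := Ring.inverse b
  set C := Ring.inverse c
  -- key identity
  have hca : c - a = η • 1 := by rw [ha_def, hc_def]; rw [sub_sub_sub_cancel_left, add_smul]; abel
  have hcb : c - b = (-η) • 1 := by
    rw [hb_def, hc_def, sub_sub_sub_cancel_left, sub_smul, neg_smul]; abel
  have hba : b - a = (2 * η) • 1 := by
    rw [ha_def, hb_def, sub_sub_sub_cancel_left, add_smul, sub_smul]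
    rw [two_mul, add_smul]; abel
  have hAC : A - C = η • (A * C) := by
    rw [inverse_sub_inverse ha hc, hca, mul_smul_comm, smul_mul_assoc]; rw [mul_one]
  have hBC : Bi - C = (-η) • (Bi * C) := by
    rw [inverse_sub_inverse hb hc, hcb, mul_smul_comm, smul_mul_assoc]; rw [mul_one]
  have hAB : A - Bi = (2 * η) • (A * Bi) := by
    rw [inverse_sub_inverse ha hb, hba, mul_smul_comm, smul_mul_assoc]; rw [mul_one]
  have key : A + Bi - ((2:ℂ) • C) = (2 * η ^ 2) • (A * Bi * C) := by
    have : A + Bi - ((2:ℂ) • C) = (A - C) + (Bi - C) := by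
      rw [two_smul]; abel
    rw [this, hAC, hBC]
    have : η • (A * C) + (-η) • (Bi * C) = η • ((A - Bi) * C) := by
      rw [sub_mul, smul_sub, neg_smul]; abel
    rw [this, hAB, smul_mul_assoc, smul_smul]
    ring_nf
  -- norms
  have hbnd : ∀ {z : ℂ}, z ∈ B → ‖Ring.inverse (T - z • (1 : H →L[ℂ] H))‖ ≤ K := by
    intro z hz
    have h : (Psi T z)⁻¹ ≤ K := hK.2 ⟨z, hz, rfl⟩
    rwa [psi_inv_eq T (hB hz)] at h
  have hKA : ‖A‖ ≤ K := hbnd hpB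
  have hKB : ‖Bi‖ ≤ K := hbnd hmB
  have hKC : ‖C‖ ≤ K := hbnd hμB
  have hK0 : 0 ≤ K := le_trans (norm_nonneg C) hKC
  have hnorm : 2 * ‖C‖ - ‖A‖ - ‖Bi‖ ≤ 2 * ‖η‖ ^ 2 * (‖A‖ * ‖Bi‖ * ‖C‖) := by
    have h1 : ‖A + Bi - ((2:ℂ) • C)‖ = ‖(2 * η ^ 2 : ℂ)‖ * ‖A * Bi * C‖ := by
      rw [key, norm_smul]
    have h2 : (2 : ℝ) * ‖C‖ - ‖A‖ - ‖Bi‖ ≤ ‖A + Bi - ((2:ℂ) • C)‖ := by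
      have := norm_sub_norm_le (((2:ℂ) • C)) (A + Bi)
      calc 2 * ‖C‖ - ‖A‖ - ‖Bi‖ = ‖((2:ℂ) • C)‖ - (‖A‖ + ‖Bi‖) := by
            rw [norm_smul]; simp; ring
        _ ≤ ‖((2:ℂ) • C)‖ - ‖A + Bi‖ := by
            have := norm_add_le A Bi; linarith
        _ ≤ ‖((2:ℂ) • C) - (A + Bi)‖ := norm_sub_norm_le _ _
        _ = ‖A + Bi - ((2:ℂ) • C)‖ := by rw [← norm_neg]; congr 1; abel
    have h3 : ‖A * Bi * C‖ ≤ ‖A‖ * ‖Bi‖ * ‖C‖ :=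
      le_trans (norm_mul_le _ _) (by
        have := norm_mul_le A Bi
        exact mul_le_mul_of_nonneg_right this (norm_nonneg C))
    have h4 : ‖(2 * η ^ 2 : ℂ)‖ = 2 * ‖η‖ ^ 2 := by
      simp [map_mul, map_pow]
    nlinarith [norm_nonneg η, norm_nonneg (A * Bi * C)]
  -- conclude
  rw [psi_inv_eq T hμs, psi_inv_eq T hps, psi_inv_eq T hms]
  have hcube : ‖A‖ * ‖Bi‖ * ‖C‖ ≤ K ^ 3 := by
    have h1 : ‖A‖ * ‖Bi‖ ≤ K * K :=
      mul_le_mul hKA hKB (norm_nonneg _) hK0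
    calc ‖A‖ * ‖Bi‖ * ‖C‖ ≤ K * K * K :=
          mul_le_mul h1 hKC (norm_nonneg _) (by positivity)
      _ = K ^ 3 := by ring
  calc 2 * ‖C‖ - ‖A‖ - ‖Bi‖ ≤ 2 * ‖η‖ ^ 2 * (‖A‖ * ‖Bi‖ * ‖C‖) := hnorm
    _ ≤ 2 * K ^ 3 * ‖η‖ ^ 2 := by nlinarith [norm_nonneg η, sq_nonneg (‖η‖)]
end

section
/- Let T be a quasitriangular bounded linear operator on a complex Hilbert space H with associated filtration {P_n} (so ‖(I−P_n) T P_n‖ → 0), and let T_n = P_n T restricted to Ran P_n. Then the functions j_{T_n} converge to j_T uniformly on all of ℂ. -/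
open Filter ContinuousLinearMap

/-- The injectivity radius `j_T(z) = inf {‖(T - z)h‖ : ‖h‖ = 1}`. -/
noncomputable def injRad {H : Type*} [NormedAddCommGroup H] [InnerProductSpace ℂ H]
    (T : H →L[ℂ] H) (z : ℂ) : ℝ :=
  sInf {r : ℝ | ∃ h : H, ‖h‖ = 1 ∧ r = ‖T h - z • h‖}

/-- `j_{Tₙ}(z) = inf {‖Pₙ T h - z h‖ : h ∈ Ran Pₙ, ‖h‖ = 1}` for the finite section
`Tₙ = Pₙ T|_{Ran Pₙ}`. -/
noncomputable def injRadSec {H : Type*} [NormedAddCommGroup H] [InnerProductSpace ℂ H]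
    (T P : H →L[ℂ] H) (z : ℂ) : ℝ :=
  sInf {r : ℝ | ∃ h : H, h ∈ LinearMap.range (P : H →ₗ[ℂ] H) ∧ ‖h‖ = 1 ∧ r = ‖P (T h) - z • h‖}

/-- A filtration: an increasing sequence of finite-rank orthogonal projections
whose ranges have dense union. -/
structure Filtration (H : Type*) [NormedAddCommGroup H] [InnerProductSpace ℂ H]
    [CompleteSpace H] where
  P : ℕ → H →L[ℂ] H
  idem : ∀ n, (P n) ∘L (P n) = P n
  selfadj : ∀ n, IsSelfAdjoint (P n)
  finiteRank : ∀ n, FiniteDimensional ℂ (LinearMap.range (P n : H →ₗ[ℂ] H))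
  mono : ∀ n, LinearMap.range (P n : H →ₗ[ℂ] H) ≤ LinearMap.range (P (n + 1) : H →ₗ[ℂ] H)
  dense : Dense (⋃ n, (LinearMap.range (P n : H →ₗ[ℂ] H) : Set H))

section aux
variable {H : Type*} [NormedAddCommGroup H] [InnerProductSpace ℂ H]

local notation "⟪" x ", " y "⟫" => @inner ℂ _ _ x y

lemma injRad_bdd (T : H →L[ℂ] H) (z : ℂ) :
    BddBelow {r : ℝ | ∃ h : H, ‖h‖ = 1 ∧ r = ‖T h - z • h‖} :=
  ⟨0, by rintro r ⟨h, -, rfl⟩; positivity⟩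

lemma injRadSec_bdd (T P : H →L[ℂ] H) (z : ℂ) :
    BddBelow {r : ℝ | ∃ h : H, h ∈ LinearMap.range (P : H →ₗ[ℂ] H) ∧ ‖h‖ = 1 ∧ r = ‖P (T h) - z • h‖} :=
  ⟨0, by rintro r ⟨h, -, -, rfl⟩; positivity⟩

lemma injRad_le (T : H →L[ℂ] H) (z : ℂ) {h : H} (hh : ‖h‖ = 1) :
    injRad T z ≤ ‖T h - z • h‖ :=
  csInf_le (injRad_bdd T z) ⟨h, hh, rfl⟩

lemma injRadSec_le (T P : H →L[ℂ] H) (z : ℂ) {h : H} (hm : h ∈ LinearMap.range (P : H →ₗ[ℂ] H))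
    (hh : ‖h‖ = 1) : injRadSec T P z ≤ ‖P (T h) - z • h‖ :=
  csInf_le (injRadSec_bdd T P z) ⟨h, hm, hh, rfl⟩

lemma le_injRad (T : H →L[ℂ] H) (z : ℂ) {c : ℝ} (hH : ∃ h : H, ‖h‖ = 1)
    (hc : ∀ h : H, ‖h‖ = 1 → c ≤ ‖T h - z • h‖) : c ≤ injRad T z := by
  obtain ⟨h0, hh0⟩ := hH
  exact le_csInf ⟨_, h0, hh0, rfl⟩ (by rintro r ⟨h, hh, rfl⟩; exact hc h hh)

lemma le_injRadSec (T P : H →L[ℂ] H) (z : ℂ) {c : ℝ}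
    (hP : ∃ h : H, h ∈ LinearMap.range (P : H →ₗ[ℂ] H) ∧ ‖h‖ = 1)
    (hc : ∀ h : H, h ∈ LinearMap.range (P : H →ₗ[ℂ] H) → ‖h‖ = 1 → c ≤ ‖P (T h) - z • h‖) :
    c ≤ injRadSec T P z := by
  obtain ⟨h0, hm0, hh0⟩ := hP
  exact le_csInf ⟨_, h0, hm0, hh0, rfl⟩ (by rintro r ⟨h, hm, hh, rfl⟩; exact hc h hm hh)

lemma injRad_nonneg (T : H →L[ℂ] H) (z : ℂ) : 0 ≤ injRad T z := by
  unfold injRad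
  rcases Set.eq_empty_or_nonempty {r : ℝ | ∃ h : H, ‖h‖ = 1 ∧ r = ‖T h - z • h‖} with h | h
  · simp [h]
  · exact le_csInf h (by rintro r ⟨h, hh, rfl⟩; positivity)

lemma exists_near_injRad (T : H →L[ℂ] H) (z : ℂ) (hH : ∃ h : H, ‖h‖ = 1)
    {ε : ℝ} (hε : 0 < ε) : ∃ h : H, ‖h‖ = 1 ∧ ‖T h - z • h‖ < injRad T z + ε := by
  obtain ⟨h0, hh0⟩ := hH
  have hne : Set.Nonempty {r : ℝ | ∃ h : H, ‖h‖ = 1 ∧ r = ‖T h - z • h‖} := ⟨_, h0, hh0, rfl⟩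
  obtain ⟨r, ⟨h, hh, rfl⟩, hr⟩ := exists_lt_of_csInf_lt hne (lt_add_of_pos_right _ hε)
  exact ⟨h, hh, hr⟩

lemma injRad_lipschitz (T : H →L[ℂ] H) (hH : ∃ h : H, ‖h‖ = 1) (z z' : ℂ) :
    injRad T z ≤ injRad T z' + ‖z - z'‖ := by
  obtain ⟨h0, hh0⟩ := hH
  have : ∀ h : H, ‖h‖ = 1 → injRad T z - ‖z - z'‖ ≤ ‖T h - z' • h‖ := by
    intro h hh
    have h1 : injRad T z ≤ ‖T h - z • h‖ := injRad_le T z hh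
    have h2 : ‖T h - z • h‖ ≤ ‖T h - z' • h‖ + ‖z - z'‖ := by
      have he : T h - z • h = (T h - z' • h) - (z - z') • h := by
        rw [sub_smul]; abel
      rw [he]
      calc ‖(T h - z' • h) - (z - z') • h‖ ≤ ‖T h - z' • h‖ + ‖(z - z') • h‖ := norm_sub_le _ _
        _ = ‖T h - z' • h‖ + ‖z - z'‖ := by rw [norm_smul, hh, mul_one]
    linarith
  linarith [le_injRad T z' ⟨h0, hh0⟩ this]

lemma proj_apply_mem_eq {P : H →L[ℂ] H} (hidem : P ∘L P = P) {h : H}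
    (hm : h ∈ LinearMap.range (P : H →ₗ[ℂ] H)) : P h = h := by
  obtain ⟨x, rfl⟩ := hm
  have := congrArg (fun A : H →L[ℂ] H => A x) hidem
  simpa using this

lemma proj_norm_apply_le [CompleteSpace H] {P : H →L[ℂ] H} (hidem : P ∘L P = P)
    (hsa : IsSelfAdjoint P) (x : H) : ‖P x‖ ≤ ‖x‖ := by
  have key : (‖P x‖ : ℝ) ^ 2 = RCLike.re ⟪x, P x⟫ := by
    have h1 : ⟪P x, P x⟫ = ⟪x, P (P x)⟫ := by
      rw [← ContinuousLinearMap.adjoint_inner_right]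
      congr 1
      exact (hsa.adjoint_eq).symm ▸ rfl
    have h2 : P (P x) = P x := by
      have := congrArg (fun A : H →L[ℂ] H => A x) hidem
      simpa using this
    rw [h2] at h1
    rw [← inner_self_eq_norm_sq (𝕜 := ℂ), h1]
  have h3 : RCLike.re ⟪x, P x⟫ ≤ ‖x‖ * ‖P x‖ := by
    calc RCLike.re ⟪x, P x⟫ ≤ ‖⟪x, P x⟫‖ := RCLike.re_le_norm _
      _ ≤ ‖x‖ * ‖P x‖ := norm_inner_le_norm _ _
  nlinarith [norm_nonneg (P x), norm_nonneg x]

lemma inner_T_bound (T : H →L[ℂ] H) {h : H} (hh : ‖h‖ = 1) : ‖⟪T h, h⟫‖ ≤ ‖T‖ := by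
  calc ‖⟪T h, h⟫‖ ≤ ‖T h‖ * ‖h‖ := norm_inner_le_norm _ _
    _ ≤ (‖T‖ * ‖h‖) * ‖h‖ := by
        have := T.le_opNorm h
        nlinarith [norm_nonneg h]
    _ = ‖T‖ := by rw [hh]; ring

lemma phi_lip_w (T : H →L[ℂ] H) {h : H} (hh : ‖h‖ = 1) (w w' : ℂ) :
    |(w * ⟪T h, h⟫).re - (w' * ⟪T h, h⟫).re| ≤ ‖w - w'‖ * ‖T‖ := by
  have he : (w * ⟪T h, h⟫).re - (w' * ⟪T h, h⟫).re = ((w - w') * ⟪T h, h⟫).re := by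
    rw [sub_mul, Complex.sub_re]
  rw [he]
  calc |((w - w') * ⟪T h, h⟫).re| ≤ ‖(w - w') * ⟪T h, h⟫‖ := Complex.abs_re_le_norm _
    _ = ‖w - w'‖ * ‖⟪T h, h⟫‖ := by rw [norm_mul]
    _ ≤ ‖w - w'‖ * ‖T‖ := by
        have := inner_T_bound T hh
        nlinarith [norm_nonneg (w - w')]

lemma phi_lip_h (T : H →L[ℂ] H) {g h : H} (hg : ‖g‖ = 1) (hh : ‖h‖ = 1) (w : ℂ) :
    |(w * ⟪T g, g⟫).re - (w * ⟪T h, h⟫).re| ≤ ‖w‖ * (2 * ‖T‖ * ‖g - h‖) := by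
  have key : ⟪T g, g⟫ - ⟪T h, h⟫ = ⟪T g - T h, g⟫ + ⟪T h, g - h⟫ := by
    rw [inner_sub_left, inner_sub_right]; ring
  have hq : ‖⟪T g, g⟫ - ⟪T h, h⟫‖ ≤ 2 * ‖T‖ * ‖g - h‖ := by
    rw [key]
    have h1 : ‖⟪T g - T h, g⟫‖ ≤ ‖T‖ * ‖g - h‖ := by
      calc ‖⟪T g - T h, g⟫‖ ≤ ‖T g - T h‖ * ‖g‖ := norm_inner_le_norm _ _
        _ = ‖T (g - h)‖ := by rw [hg, mul_one, map_sub]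
        _ ≤ ‖T‖ * ‖g - h‖ := T.le_opNorm _
    have h2 : ‖⟪T h, g - h⟫‖ ≤ ‖T‖ * ‖g - h‖ := by
      calc ‖⟪T h, g - h⟫‖ ≤ ‖T h‖ * ‖g - h‖ := norm_inner_le_norm _ _
        _ ≤ (‖T‖ * ‖h‖) * ‖g - h‖ := by
            have := T.le_opNorm h
            nlinarith [norm_nonneg (g - h)]
        _ = ‖T‖ * ‖g - h‖ := by rw [hh, mul_one]
    calc ‖⟪T g - T h, g⟫ + ⟪T h, g - h⟫‖ ≤ _ + _ := norm_add_le _ _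
      _ ≤ 2 * ‖T‖ * ‖g - h‖ := by linarith
  have he : (w * ⟪T g, g⟫).re - (w * ⟪T h, h⟫).re = (w * (⟪T g, g⟫ - ⟪T h, h⟫)).re := by
    rw [mul_sub, Complex.sub_re]
  rw [he]
  calc |(w * (⟪T g, g⟫ - ⟪T h, h⟫)).re| ≤ ‖w * (⟪T g, g⟫ - ⟪T h, h⟫)‖ := Complex.abs_re_le_norm _
    _ = ‖w‖ * ‖⟪T g, g⟫ - ⟪T h, h⟫‖ := norm_mul _ _
    _ ≤ ‖w‖ * (2 * ‖T‖ * ‖g - h‖) := by nlinarith [norm_nonneg w]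

lemma norm_expand (T : H →L[ℂ] H) (z : ℂ) (h : H) :
    ‖T h - z • h‖ ^ 2 = ‖T h‖ ^ 2 - 2 * (z * ⟪T h, h⟫).re + ‖z‖ ^ 2 * ‖h‖ ^ 2 := by
  have h0 := @norm_sub_sq ℂ _ _ _ _ (T h) (z • h)
  rw [h0, inner_smul_right]
  have h1 : ‖z • h‖ ^ 2 = ‖z‖ ^ 2 * ‖h‖ ^ 2 := by rw [norm_smul]; ring
  rw [h1]
  norm_num [RCLike.re_to_complex, Complex.mul_re]

lemma helper_frac {x c : ℝ} (hx : 0 ≤ x) (hc : 0 ≤ c) : x * (c / (8 * (x + 1))) ≤ c / 8 := by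
  have h1 : (0:ℝ) < 8 * (x + 1) := by linarith
  rw [mul_div_assoc', div_le_div_iff₀ h1 (by norm_num : (0:ℝ) < 8)]
  nlinarith [mul_nonneg hx hc]

end aux

section filt
variable {H : Type*} [NormedAddCommGroup H] [InnerProductSpace ℂ H] [CompleteSpace H]
  (F : Filtration H)

local notation "⟪" x ", " y "⟫" => @inner ℂ _ _ x y

lemma Filtration.range_mono {m n : ℕ} (hmn : m ≤ n) :
    LinearMap.range (F.P m : H →ₗ[ℂ] H) ≤ LinearMap.range (F.P n : H →ₗ[ℂ] H) := by
  induction n, hmn using Nat.le_induction with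
  | base => exact le_rfl
  | succ n hmn ih => exact ih.trans (F.mono n)

lemma Filtration.exists_approx (x : H) {δ : ℝ} (hδ : 0 < δ) :
    ∃ N, ∀ n ≥ N, ∃ y ∈ LinearMap.range (F.P n : H →ₗ[ℂ] H), ‖y - x‖ < δ := by
  have hx := F.dense x
  rw [Metric.mem_closure_iff] at hx
  obtain ⟨y, hy, hxy⟩ := hx δ hδ
  obtain ⟨m, hym⟩ := Set.mem_iUnion.mp hy
  refine ⟨m, fun n hn => ⟨y, F.range_mono hn hym, ?_⟩⟩
  rw [dist_comm] at hxy
  simpa [dist_eq_norm] using hxy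

lemma Filtration.exists_unit_approx {h : H} (hh : ‖h‖ = 1) {δ : ℝ} (hδ : 0 < δ) :
    ∃ N, ∀ n ≥ N, ∃ g ∈ LinearMap.range (F.P n : H →ₗ[ℂ] H), ‖g‖ = 1 ∧ ‖g - h‖ < δ := by
  have hδ3 : 0 < min (δ / 3) (1 / 3) := by positivity
  obtain ⟨N, hN⟩ := F.exists_approx h hδ3
  refine ⟨N, fun n hn => ?_⟩
  obtain ⟨y, hy, hyh⟩ := hN n hn
  have hyh3 : ‖y - h‖ < 1 / 3 := lt_of_lt_of_le hyh (min_le_right _ _)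
  have hyhδ : ‖y - h‖ < δ / 3 := lt_of_lt_of_le hyh (min_le_left _ _)
  have hy0 : (0 : ℝ) < ‖y‖ := by
    have : ‖h‖ - ‖y‖ ≤ ‖y - h‖ := by
      simpa [norm_sub_rev] using norm_sub_norm_le h y
    linarith [hh ▸ this]
  refine ⟨(‖y‖ : ℂ)⁻¹ • y, ?_, ?_, ?_⟩
  · exact Submodule.smul_mem _ _ hy
  · rw [norm_smul]
    simp [norm_inv, hy0.ne']
  · have split : (‖y‖ : ℂ)⁻¹ • y - h = ((‖y‖ : ℂ)⁻¹ • y - y) + (y - h) := by abel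
    have e1 : (‖y‖ : ℂ)⁻¹ • y - y = ((‖y‖ : ℂ)⁻¹ - 1) • y := by rw [sub_smul, one_smul]
    have e2 : ‖(‖y‖ : ℂ)⁻¹ • y - y‖ = |‖y‖⁻¹ - 1| * ‖y‖ := by
      rw [e1, norm_smul]
      congr 1
      have : ((‖y‖ : ℂ)⁻¹ - 1) = ((‖y‖⁻¹ - 1 : ℝ) : ℂ) := by push_cast; ring
      rw [this, Complex.norm_real, Real.norm_eq_abs]
    have e3 : |‖y‖⁻¹ - 1| * ‖y‖ = |1 - ‖y‖| := by
      rw [← abs_of_pos hy0, ← abs_mul, sub_mul, one_mul]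
      rw [abs_of_pos hy0, inv_mul_cancel₀ hy0.ne']
    have e4 : |1 - ‖y‖| ≤ ‖y - h‖ := by
      have := abs_norm_sub_norm_le h y
      rw [hh, norm_sub_rev] at this
      exact this
    calc ‖(‖y‖ : ℂ)⁻¹ • y - h‖ ≤ ‖(‖y‖ : ℂ)⁻¹ • y - y‖ + ‖y - h‖ := by
          rw [split]; exact norm_add_le _ _
      _ ≤ ‖y - h‖ + ‖y - h‖ := by rw [e2, e3]; linarith
      _ < δ := by linarith

lemma Filtration.injRadSec_le_norm (T : H →L[ℂ] H) (n : ℕ) (z : ℂ) {g : H}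
    (hm : g ∈ LinearMap.range (F.P n : H →ₗ[ℂ] H)) (hu : ‖g‖ = 1) :
    injRadSec T (F.P n) z ≤ ‖T g - z • g‖ := by
  refine (injRadSec_le T (F.P n) z hm hu).trans ?_
  have hg : F.P n g = g := proj_apply_mem_eq (F.idem n) hm
  have he : F.P n (T g) - z • g = F.P n (T g - z • g) := by
    rw [map_sub, map_smul, hg]
  rw [he]
  exact proj_norm_apply_le (F.idem n) (F.selfadj n) _

end filt

set_option maxHeartbeats 2000000 in
theorem injRadSec_tendstoUniformly {H : Type*} [NormedAddCommGroup H] [InnerProductSpace ℂ H] [CompleteSpace H]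
    (T : H →L[ℂ] H) (F : Filtration H)
    (hF : Tendsto (fun n => ‖((1 : H →L[ℂ] H) - F.P n) ∘L T ∘L F.P n‖) atTop (nhds 0)) :
    TendstoUniformly (fun n z => injRadSec T (F.P n) z) (injRad T) atTop := by
  rw [Metric.tendstoUniformly_iff]
  intro ε hε
  by_cases hH : ∃ h : H, ‖h‖ = 1
  swap
  · have hR : ∀ z, injRad T z = 0 := by
      intro z
      unfold injRad
      convert Real.sInf_empty using 2
      ext r
      simp only [Set.mem_setOf_eq, Set.mem_empty_iff_false, iff_false, not_exists]
      rintro h ⟨hh, -⟩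
      exact hH ⟨h, hh⟩
    have hS : ∀ n z, injRadSec T (F.P n) z = 0 := by
      intro n z
      unfold injRadSec
      convert Real.sInf_empty using 2
      ext r
      simp only [Set.mem_setOf_eq, Set.mem_empty_iff_false, iff_false, not_exists]
      rintro h ⟨-, hh, -⟩
      exact hH ⟨h, hh⟩
    filter_upwards with n z
    simp [hR, hS, hε]
  · set M := ‖T‖ with hM
    have hM0 : (0:ℝ) ≤ M := norm_nonneg T
    set ε' : ℝ := min (ε / 2) 1 with hε'def
    have hε' : 0 < ε' := lt_min (by linarith) one_pos
    have hε'1 : ε' ≤ 1 := min_le_right _ _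
    have hε'ε : ε' < ε := by
      rcases le_or_gt ε 2 with h | h
      · exact lt_of_le_of_lt (min_le_left _ _) (by linarith)
      · exact lt_of_le_of_lt (min_le_right _ _) (by linarith)
    have evA : ∀ᶠ n in atTop, ∀ z : ℂ, injRad T z ≤ injRadSec T (F.P n) z + ε' := by
      have h1 : ∀ᶠ n in atTop, ‖((1 : H →L[ℂ] H) - F.P n) ∘L T ∘L F.P n‖ < ε' :=
        hF.eventually_lt_const hε'
      obtain ⟨h₀, hh₀⟩ := hH
      obtain ⟨N₀, hN₀⟩ := F.exists_unit_approx hh₀ one_pos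
      filter_upwards [h1, eventually_ge_atTop N₀] with n hn hnN z
      obtain ⟨g₀, hg₀m, hg₀u, -⟩ := hN₀ n hnN
      have key : injRad T z - ε' ≤ injRadSec T (F.P n) z := by
        apply le_injRadSec T (F.P n) z ⟨g₀, hg₀m, hg₀u⟩
        intro h hm hu
        have hPh : F.P n h = h := proj_apply_mem_eq (F.idem n) hm
        have hsplit : T h - z • h =
            (F.P n (T h) - z • h) + (((1 : H →L[ℂ] H) - F.P n) ∘L T ∘L F.P n) h := by
          simp only [ContinuousLinearMap.comp_apply, ContinuousLinearMap.sub_apply,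
            ContinuousLinearMap.one_apply, hPh]
          abel
        have h2 : ‖T h - z • h‖ ≤ ‖F.P n (T h) - z • h‖ + ε' := by
          rw [hsplit]
          refine (norm_add_le _ _).trans ?_
          have h3 : ‖(((1 : H →L[ℂ] H) - F.P n) ∘L T ∘L F.P n) h‖ ≤
              ‖((1 : H →L[ℂ] H) - F.P n) ∘L T ∘L F.P n‖ * ‖h‖ := le_opNorm _ _
          rw [hu, mul_one] at h3
          linarith
        linarith [injRad_le T z hu]
      linarith
    have evB : ∀ᶠ n in atTop, ∀ z : ℂ, injRadSec T (F.P n) z ≤ injRad T z + ε' := by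
      set ε₂ : ℝ := ε' / 4 with hε₂def
      have hε₂ : 0 < ε₂ := by positivity
      set ρ : ℝ := ε₂ / (8 * (M + 1)) with hρdef
      have hρ : 0 < ρ := by positivity
      set R : ℝ := 2 * M + 2 + 2 * M ^ 2 / ε' with hRdef
      have hR2 : 2 * M + 2 ≤ R := by
        rw [hRdef]
        have : (0:ℝ) ≤ 2 * M ^ 2 / ε' := by positivity
        linarith
      -- regime 1 claim
      have claim1 : ∀ y : ℂ, ∀ᶠ n in atTop, ∃ g, g ∈ LinearMap.range (F.P n : H →ₗ[ℂ] H) ∧ ‖g‖ = 1 ∧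
          ‖T g - y • g‖ ≤ injRad T y + ε' / 4 := by
        intro y
        obtain ⟨hy, hyu, hynear⟩ := exists_near_injRad T y hH (by positivity : (0:ℝ) < ε' / 8)
        have hδ1 : (0:ℝ) < ε' / (8 * (M + ‖y‖ + 1)) := by positivity
        obtain ⟨N, hN⟩ := F.exists_unit_approx hyu hδ1
        filter_upwards [eventually_ge_atTop N] with n hn
        obtain ⟨g, hgm, hgu, hgh⟩ := hN n hn
        refine ⟨g, hgm, hgu, ?_⟩
        have hsplit : T g - y • g = (T hy - y • hy) + (T (g - hy) - y • (g - hy)) := by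
          rw [map_sub, smul_sub]; abel
        have hb1 : ‖T (g - hy) - y • (g - hy)‖ ≤ (M + ‖y‖) * ‖g - hy‖ := by
          refine (norm_sub_le _ _).trans ?_
          have b1 := T.le_opNorm (g - hy)
          have b2 : ‖y • (g - hy)‖ = ‖y‖ * ‖g - hy‖ := norm_smul _ _
          rw [b2]
          rw [← hM] at b1
          linarith
        have hb2 : (M + ‖y‖) * ‖g - hy‖ ≤ ε' / 8 := by
          have hc0 : (0:ℝ) ≤ M + ‖y‖ := by positivity
          have := mul_le_mul_of_nonneg_left hgh.le hc0
          have hfr : (M + ‖y‖) * (ε' / (8 * ((M + ‖y‖) + 1))) ≤ ε' / 8 :=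
            helper_frac hc0 hε'.le
          calc (M + ‖y‖) * ‖g - hy‖ ≤ (M + ‖y‖) * (ε' / (8 * (M + ‖y‖ + 1))) := this
            _ ≤ ε' / 8 := hfr
        calc ‖T g - y • g‖ ≤ ‖T hy - y • hy‖ + ‖T (g - hy) - y • (g - hy)‖ := by
              rw [hsplit]; exact norm_add_le _ _
          _ ≤ (injRad T y + ε' / 8) + ε' / 8 := by linarith
          _ ≤ injRad T y + ε' / 4 := by linarith
      -- regime 2 claim
      have claim2 : ∀ w : ℂ, ∀ᶠ n in atTop, ∃ g, g ∈ LinearMap.range (F.P n : H →ₗ[ℂ] H) ∧ ‖g‖ = 1 ∧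
          ∀ w' : ℂ, ‖w'‖ = 1 → ‖w' - w‖ < ρ → ∀ h : H, ‖h‖ = 1 →
            (w' * (inner ℂ (T h) h : ℂ)).re ≤ (w' * (inner ℂ (T g) g : ℂ)).re + ε₂ := by
        intro w
        set S : Set ℝ := {c : ℝ | ∃ h : H, ‖h‖ = 1 ∧ c = (w * (inner ℂ (T h) h : ℂ)).re}
          with hSdef
        have hSne : S.Nonempty := by
          obtain ⟨h0, hh0⟩ := hH
          exact ⟨_, h0, hh0, rfl⟩
        have hSbdd : BddAbove S := by
          refine ⟨‖w‖ * M, ?_⟩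
          rintro c ⟨h, hu, rfl⟩
          calc (w * (inner ℂ (T h) h : ℂ)).re ≤ |(w * (inner ℂ (T h) h : ℂ)).re| := le_abs_self _
            _ ≤ ‖w * (inner ℂ (T h) h : ℂ)‖ := Complex.abs_re_le_norm _
            _ = ‖w‖ * ‖(inner ℂ (T h) h : ℂ)‖ := norm_mul _ _
            _ ≤ ‖w‖ * M := by
                have := inner_T_bound T hu
                nlinarith [norm_nonneg w]
        obtain ⟨c, ⟨hw, hwu, rfl⟩, hcgt⟩ :=
          exists_lt_of_lt_csSup hSne (show sSup S - ε₂ / 4 < sSup S by linarith)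
        obtain ⟨N, hN⟩ := F.exists_unit_approx hwu hρ
        filter_upwards [eventually_ge_atTop N] with n hn
        obtain ⟨g, hgm, hgu, hgh⟩ := hN n hn
        refine ⟨g, hgm, hgu, ?_⟩
        intro w' hw'1 hw'w h hu
        have t1 := phi_lip_w T hu w' w
        have t2 : (w * (inner ℂ (T h) h : ℂ)).re ≤ sSup S := le_csSup hSbdd ⟨h, hu, rfl⟩
        have t4 := phi_lip_w T hwu w w'
        have t5 := phi_lip_h T hgu hwu w'
        rw [hw'1, one_mul] at t5
        have hwrev : ‖w - w'‖ = ‖w' - w‖ := norm_sub_rev _ _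
        have m1 : ‖w' - w‖ * M ≤ ρ * M := mul_le_mul_of_nonneg_right hw'w.le hM0
        have m2 : ρ * M ≤ ε₂ / 8 := by
          have := helper_frac hM0 hε₂.le
          calc ρ * M = M * (ε₂ / (8 * (M + 1))) := by rw [hρdef]; ring
            _ ≤ ε₂ / 8 := this
        have m3 : 2 * M * ‖g - hw‖ ≤ 2 * (ε₂ / 8) := by
          have h1 : 2 * M * ‖g - hw‖ ≤ 2 * M * ρ := by
            nlinarith [hgh, hM0, norm_nonneg (g - hw)]
          have h2 : 2 * M * ρ ≤ 2 * (ε₂ / 8) := by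
            have := helper_frac hM0 hε₂.le
            have e : M * ρ = M * (ε₂ / (8 * (M + 1))) := by rw [hρdef]
            nlinarith
          linarith
        have u1 := (abs_sub_le_iff.mp t1).1
        have u4 := (abs_sub_le_iff.mp t4).1
        have u5 := (abs_sub_le_iff.mp t5).2
        rw [hwrev] at u4
        linarith only [u1, t2, hcgt, u4, u5, m1, m2, m3, hε₂.le]
      -- covering nets
      obtain ⟨t1, ht1fin, ht1cov⟩ :=
        Metric.totallyBounded_iff.mp (isCompact_closedBall (0:ℂ) R).totallyBounded
          (ε' / 8) (by positivity)
      obtain ⟨t2, ht2fin, ht2cov⟩ :=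
        Metric.totallyBounded_iff.mp (isCompact_sphere (0:ℂ) 1).totallyBounded ρ hρ
      have ev1 : ∀ᶠ n in atTop, ∀ y ∈ t1, ∃ g, g ∈ LinearMap.range (F.P n : H →ₗ[ℂ] H) ∧ ‖g‖ = 1 ∧
          ‖T g - y • g‖ ≤ injRad T y + ε' / 4 :=
        (Filter.eventually_all_finite ht1fin).mpr (fun y _ => claim1 y)
      have ev2 : ∀ᶠ n in atTop, ∀ w ∈ t2, ∃ g, g ∈ LinearMap.range (F.P n : H →ₗ[ℂ] H) ∧ ‖g‖ = 1 ∧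
          ∀ w' : ℂ, ‖w'‖ = 1 → ‖w' - w‖ < ρ → ∀ h : H, ‖h‖ = 1 →
            (w' * (inner ℂ (T h) h : ℂ)).re ≤ (w' * (inner ℂ (T g) g : ℂ)).re + ε₂ :=
        (Filter.eventually_all_finite ht2fin).mpr (fun w _ => claim2 w)
      filter_upwards [ev1, ev2] with n hn1 hn2 z
      by_cases hz : ‖z‖ ≤ R
      · -- regime 1
        have hzb : z ∈ Metric.closedBall (0:ℂ) R := mem_closedBall_zero_iff.mpr hz
        obtain ⟨y, hyt, hzy⟩ := Set.mem_iUnion₂.mp (ht1cov hzb)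
        have hdzy : ‖z - y‖ < ε' / 8 := by
          rw [← dist_eq_norm]; exact Metric.mem_ball.mp hzy
        obtain ⟨g, hgm, hgu, hgb⟩ := hn1 y hyt
        have c1 : injRadSec T (F.P n) z ≤ ‖T g - z • g‖ :=
          F.injRadSec_le_norm T n z hgm hgu
        have c2 : ‖T g - z • g‖ ≤ ‖T g - y • g‖ + ‖z - y‖ := by
          have he : T g - z • g = (T g - y • g) - (z - y) • g := by
            rw [sub_smul]; abel
          rw [he]
          refine (norm_sub_le _ _).trans ?_
          rw [norm_smul, hgu, mul_one]
        have c3 : injRad T y ≤ injRad T z + ‖y - z‖ := injRad_lipschitz T hH y z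
        have c4 : ‖y - z‖ = ‖z - y‖ := norm_sub_rev y z
        linarith
      · -- regime 2
        push_neg at hz
        have hrM : 2 * M + 2 < ‖z‖ := lt_of_le_of_lt hR2 hz
        have hr0 : (0:ℝ) < ‖z‖ := by linarith
        have hrC : ((‖z‖ : ℝ) : ℂ) ≠ 0 := by
          exact_mod_cast hr0.ne'
        set w' : ℂ := ((‖z‖ : ℝ) : ℂ)⁻¹ * z with hw'def
        have hw'1 : ‖w'‖ = 1 := by
          rw [hw'def, norm_mul, norm_inv, Complex.norm_real, Real.norm_eq_abs,
            abs_of_pos hr0]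
          exact inv_mul_cancel₀ hr0.ne'
        have hw's : w' ∈ Metric.sphere (0:ℂ) 1 := mem_sphere_zero_iff_norm.mpr hw'1
        obtain ⟨w, hwt, hw'ball⟩ := Set.mem_iUnion₂.mp (ht2cov hw's)
        have hww' : ‖w' - w‖ < ρ := by
          rw [← dist_eq_norm]; exact Metric.mem_ball.mp hw'ball
        obtain ⟨g, hgm, hgu, hgp⟩ := hn2 w hwt
        have hφ : ∀ h : H, ‖h‖ = 1 →
            (w' * (inner ℂ (T h) h : ℂ)).re ≤ (w' * (inner ℂ (T g) g : ℂ)).re + ε₂ :=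
          fun h hu => hgp w' hw'1 hww' h hu
        have hzw : z = ((‖z‖ : ℝ) : ℂ) * w' := by
          rw [hw'def, ← mul_assoc, mul_inv_cancel₀ hrC, one_mul]
        have hre : ∀ x : H, (z * (inner ℂ (T x) x : ℂ)).re
            = ‖z‖ * (w' * (inner ℂ (T x) x : ℂ)).re := by
          intro x
          conv_lhs => rw [hzw]
          rw [mul_assoc, Complex.re_ofReal_mul]
        have hd0 : (0:ℝ) ≤ M ^ 2 + 2 * ‖z‖ * ε₂ := by positivity
        have hTg : ‖T g‖ ≤ M := by
          have := T.le_opNorm g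
          rw [hgu, mul_one] at this
          exact this
        have hlow : ∀ h : H, ‖h‖ = 1 →
            ‖T g - z • g‖ ^ 2 - (M ^ 2 + 2 * ‖z‖ * ε₂) ≤ ‖T h - z • h‖ ^ 2 := by
          intro h hu
          have e1 := norm_expand T z h
          have e2 := norm_expand T z g
          rw [hre h, hu] at e1
          rw [hre g, hgu] at e2
          have hq := hφ h hu
          have hmul : 2 * ‖z‖ * (w' * (inner ℂ (T h) h : ℂ)).re
              ≤ 2 * ‖z‖ * ((w' * (inner ℂ (T g) g : ℂ)).re + ε₂) :=
            mul_le_mul_of_nonneg_left hq (by positivity)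
          have hTg2 : ‖T g‖ ^ 2 ≤ M ^ 2 := by nlinarith [norm_nonneg (T g)]
          have hTh2 : (0:ℝ) ≤ ‖T h‖ ^ 2 := by positivity
          nlinarith [e1, e2, hmul]
        have hj1 : ‖z‖ - M ≤ injRad T z := by
          apply le_injRad T z hH
          intro h hu
          have h1 : ‖z • h‖ - ‖T h‖ ≤ ‖z • h - T h‖ := norm_sub_norm_le _ _
          rw [norm_smul, hu, mul_one, norm_sub_rev] at h1
          have h2 : ‖T h‖ ≤ M := by
            have := T.le_opNorm h
            rw [hu, mul_one] at this
            exact this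
          linarith
        have hj0 : 0 < injRad T z := lt_of_lt_of_le (by linarith) hj1
        have hjsq : ‖T g - z • g‖ ^ 2 - (M ^ 2 + 2 * ‖z‖ * ε₂) ≤ injRad T z ^ 2 := by
          rcases le_or_gt (‖T g - z • g‖ ^ 2 - (M ^ 2 + 2 * ‖z‖ * ε₂)) 0 with hc | hc
          · nlinarith [hj0]
          · have hsq : Real.sqrt (‖T g - z • g‖ ^ 2 - (M ^ 2 + 2 * ‖z‖ * ε₂)) ≤ injRad T z := by
              apply le_injRad T z hH
              intro h hu
              calc Real.sqrt (‖T g - z • g‖ ^ 2 - (M ^ 2 + 2 * ‖z‖ * ε₂))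
                  ≤ Real.sqrt (‖T h - z • h‖ ^ 2) := Real.sqrt_le_sqrt (hlow h hu)
                _ = ‖T h - z • h‖ := Real.sqrt_sq (norm_nonneg _)
            have := Real.sq_sqrt hc.le
            nlinarith [Real.sqrt_nonneg (‖T g - z • g‖ ^ 2 - (M ^ 2 + 2 * ‖z‖ * ε₂))]
        have ha0 : (0:ℝ) ≤ ‖T g - z • g‖ := norm_nonneg _
        have hb0 : (0:ℝ) ≤ injRad T z + (M ^ 2 + 2 * ‖z‖ * ε₂) / (2 * injRad T z) := by
          positivity
        have haj : ‖T g - z • g‖ ≤ injRad T z + (M ^ 2 + 2 * ‖z‖ * ε₂) / (2 * injRad T z) := by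
          have e : 2 * injRad T z * ((M ^ 2 + 2 * ‖z‖ * ε₂) / (2 * injRad T z))
              = M ^ 2 + 2 * ‖z‖ * ε₂ := by field_simp
          have hsq2 : ‖T g - z • g‖ ^ 2
              ≤ (injRad T z + (M ^ 2 + 2 * ‖z‖ * ε₂) / (2 * injRad T z)) ^ 2 := by
            nlinarith [sq_nonneg ((M ^ 2 + 2 * ‖z‖ * ε₂) / (2 * injRad T z)), hjsq, e]
          nlinarith [hsq2, ha0, hb0]
        have hfrac : (M ^ 2 + 2 * ‖z‖ * ε₂) / (2 * injRad T z) ≤ ε' := by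
          have h2j : (0:ℝ) < 2 * (‖z‖ - M) := by linarith
          have hle : (M ^ 2 + 2 * ‖z‖ * ε₂) / (2 * injRad T z)
              ≤ (M ^ 2 + 2 * ‖z‖ * ε₂) / (2 * (‖z‖ - M)) :=
            div_le_div_of_nonneg_left hd0 h2j (by linarith)
          have hfin : (M ^ 2 + 2 * ‖z‖ * ε₂) / (2 * (‖z‖ - M)) ≤ ε' := by
            rw [div_le_iff₀ h2j]
            have hRr : ε' * R ≤ ε' * ‖z‖ := mul_le_mul_of_nonneg_left hz.le hε'.le
            have hRe : ε' * R = ε' * (2 * M + 2) + 2 * M ^ 2 := by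
              rw [hRdef]
              field_simp
            rw [hRe] at hRr
            rw [hε₂def]
            nlinarith [hM0, hε'.le, mul_nonneg hε'.le hM0]
          linarith
        have hsa : injRadSec T (F.P n) z ≤ ‖T g - z • g‖ :=
          F.injRadSec_le_norm T n z hgm hgu
        linarith
    filter_upwards [evA, evB] with n hA hB z
    rw [Real.dist_eq, abs_sub_lt_iff]
    exact ⟨by linarith [hA z, hε'ε], by linarith [hB z, hε'ε]⟩
end

section
/- For t ∈ ℂ with Re t > 0, let f_t(z) = √(z² − z + t) using the principal branch of the square root, which is analytic in a neighborhood of z = 0, and let f̂_n(t) = (dⁿ/dzⁿ f_t)(0) / n! be its n-th Taylor coefficient at 0. Then for every r with 0 < r < 1/4 and every M > 0, there exists a positive integer N = N(r, M) such that for all t ∈ ℂ with |t − 1/4| = r one has max_{1 ≤ n ≤ N} |f̂_n(t)| > M. -/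
open Complex Metric Filter

lemma slit_pos' {ε : ℝ} (hε : 0 < ε) {t z : ℂ} (ht : ε/2 < t.re)
    (hz : ‖z‖ ≤ ε/8) (hε4 : ε ≤ 1/4) : 0 < (z^2 - z + t).re := by
  have h1 : ‖z ^ 2 - z‖ ≤ ‖z‖ ^ 2 + ‖z‖ := by
    calc ‖z ^ 2 - z‖ ≤ ‖z ^ 2‖ + ‖z‖ :=
      norm_sub_le _ _
    _ = ‖z‖ ^ 2 + ‖z‖ := by rw [norm_pow]
  have h2 : -‖z ^ 2 - z‖ ≤ (z ^ 2 - z).re := neg_le_of_abs_le (Complex.abs_re_le_norm _)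
  have h3 : (z ^ 2 - z + t).re = (z ^ 2 - z).re + t.re := Complex.add_re _ _
  have h4 : 0 ≤ ‖z‖ := norm_nonneg _
  nlinarith

lemma analyticAt_sq2 {t z : ℂ} (h : 0 < (z^2 - z + t).re) :
    AnalyticAt ℂ (fun w : ℂ => (w ^ 2 - w + t) ^ ((1:ℂ)/2)) z := by
  have hb : AnalyticAt ℂ (fun w : ℂ => w ^ 2 - w + t) z :=
    ((analyticAt_id.pow 2).sub analyticAt_id).add analyticAt_const
  exact hb.cpow analyticAt_const (Complex.mem_slitPlane_iff.mpr (Or.inl h))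

lemma sq_cpow_half {w : ℂ} (hw : w ≠ 0) : (w ^ ((1:ℂ)/2)) ^ 2 = w := by
  rw [sq, ← Complex.cpow_add _ _ hw]
  norm_num

lemma not_all_small {r : ℝ} (hr0 : 0 < r) (hr : r < 1/4) {t : ℂ}
    (hcirc : ‖t - 1/4‖ = r) (M : ℝ) :
    ¬ ∀ n : ℕ, 1 ≤ n →
      ‖iteratedDeriv n (fun z : ℂ => (z ^ 2 - z + t) ^ ((1:ℂ)/2)) 0
        / ((n.factorial : ℕ) : ℂ)‖ ≤ M := by
  intro hbd
  set f : ℂ → ℂ := fun z : ℂ => (z ^ 2 - z + t) ^ ((1:ℂ)/2) with hf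
  set c : ℕ → ℂ := fun n => iteratedDeriv n f 0 / ((n.factorial : ℕ) : ℂ) with hc
  set ε : ℝ := 1/4 - r with hε
  have hε0 : 0 < ε := by simp [hε]; linarith
  have hε4 : ε ≤ 1/4 := by simp [hε]; linarith
  set δ : ℝ := ε/8 with hδ
  have hδ0 : 0 < δ := by positivity
  -- t has real part > ε/2
  have htre : ε/2 < t.re := by
    have h1 : -‖t - 1/4‖ ≤ (t - 1/4).re := neg_le_of_abs_le (Complex.abs_re_le_norm _)
    have h2 : (t - 1/4).re = t.re - 1/4 := by simp
    rw [hcirc, h2] at h1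
    simp only [hε]; linarith
  -- positivity of real part of the quadratic near zero
  have hpos : ∀ z : ℂ, ‖z‖ ≤ δ → 0 < (z^2 - z + t).re := fun z hz =>
    slit_pos' hε0 htre (by rw [← hδ]; exact hz) hε4
  -- f analytic / differentiable on the closed ball of radius δ
  have hfd : DifferentiableOn ℂ f (Metric.ball 0 δ) := by
    intro z hz
    have : ‖z‖ ≤ δ := le_of_lt (by simpa using mem_ball_zero_iff.mp hz)
    exact (analyticAt_sq2 (hpos z this)).differentiableAt.differentiableWithinAt
  -- bounded coefficients
  set C : ℝ := max M ‖c 0‖ with hC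
  have hCb : ∀ n, ‖c n‖ ≤ C := by
    intro n
    rcases Nat.eq_zero_or_pos n with h | h
    · rw [h]; exact le_max_right _ _
    · exact le_trans (hbd n h) (le_max_left _ _)
  -- power series with coefficients c
  set q : FormalMultilinearSeries ℂ ℂ ℂ := FormalMultilinearSeries.ofScalars ℂ c with hq
  have hrad : 1 ≤ q.radius := by
    have := q.le_radius_of_bound C (r := 1) (fun n => by
      rw [hq, FormalMultilinearSeries.ofScalars_norm]
      simpa using hCb n)
    simpa using this
  set g : ℂ → ℂ := q.sum with hg
  have hqb : HasFPowerSeriesOnBall g q 0 q.radius :=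
    q.hasFPowerSeriesOnBall (lt_of_lt_of_le one_pos hrad)
  have hgan : AnalyticOnNhd ℂ g (Metric.ball 0 1) := by
    intro x hx
    apply hqb.analyticAt_of_mem
    have : Metric.ball (0:ℂ) 1 = Metric.eball 0 ((1:NNReal) : ENNReal) := by
      rw [Metric.eball_coe]; norm_num
    rw [this] at hx
    exact Metric.eball_subset_eball (by simpa using hrad) hx
  -- g = f near 0
  have hgf : ∀ z ∈ Metric.ball (0:ℂ) δ, g z = f z := by
    intro z hz
    have h1 : g z = ∑' n : ℕ, c n • z ^ n := by
      rw [hg, FormalMultilinearSeries.sum]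
      exact tsum_congr fun n => by rw [hq, FormalMultilinearSeries.ofScalars_apply_eq]
    have h2 : ∑' n : ℕ, ((n.factorial : ℂ))⁻¹ * iteratedDeriv n f 0 * (z - 0) ^ n = f z :=
      Complex.taylorSeries_eq_on_ball' hz hfd
    rw [h1, ← h2]
    exact tsum_congr fun n => by rw [hc]; push_cast; rw [sub_zero, smul_eq_mul]; ring
  -- identity theorem
  have hq0 : ∀ z : ℂ, ‖z‖ ≤ δ → (z^2 - z + t) ≠ 0 := by
    intro z hz h0
    have := hpos z hz
    rw [h0] at this; simp at this
  have hEq : Set.EqOn (fun z => g z ^ 2) (fun z : ℂ => z ^ 2 - z + t) (Metric.ball 0 1) := by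
    apply AnalyticOnNhd.eqOn_of_preconnected_of_eventuallyEq
      (fun x hx => (hgan x hx).pow 2)
      (fun x _ => ((analyticAt_id.pow 2).sub analyticAt_id).add analyticAt_const)
      (convex_ball (0:ℂ) 1).isPreconnected (mem_ball_self one_pos)
    filter_upwards [Metric.ball_mem_nhds (0:ℂ) hδ0] with z hz
    have habs : ‖z‖ ≤ δ := le_of_lt (by simpa using mem_ball_zero_iff.mp hz)
    show g z ^ 2 = z ^ 2 - z + t
    rw [hgf z hz]
    exact sq_cpow_half (hq0 z habs)
  -- the root z₀
  have hu0 : (1:ℂ) - 4*t ≠ 0 := by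
    intro h0
    have h1 : ‖(1:ℂ) - 4*t‖ = 4 * r := by
      rw [show (1:ℂ) - 4*t = (-4) * (t - 1/4) by ring, norm_mul, hcirc]
      norm_num
    rw [h0] at h1; simp at h1; linarith
  set w : ℂ := ((1:ℂ) - 4*t) ^ ((1:ℂ)/2) with hw
  have hw2 : w ^ 2 = 1 - 4*t := sq_cpow_half hu0
  have hwabs : ‖w‖ < 1 := by
    have h1 : ‖(1:ℂ) - 4*t‖ = 4 * r := by
      rw [show (1:ℂ) - 4*t = (-4) * (t - 1/4) by ring, norm_mul, hcirc]
      norm_num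
    have h2 : ‖w‖ = (4*r) ^ (1/2 : ℝ) := by
      rw [hw, show ((1:ℂ)/2) = (((1:ℝ)/2 : ℝ) : ℂ) by norm_num, Complex.norm_cpow_real, h1]
    rw [h2]
    exact Real.rpow_lt_one (by linarith) (by linarith) (by norm_num)
  set z₀ : ℂ := (1 - w)/2 with hz₀
  have hz0mem : z₀ ∈ Metric.ball (0:ℂ) 1 := by
    rw [mem_ball_zero_iff]
    calc ‖z₀‖ = ‖1 - w‖ / 2 := by
          rw [hz₀]; simp [norm_div]
    _ ≤ (1 + ‖w‖) / 2 := by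
          have := norm_sub_le (1:ℂ) w
          simp only [norm_one] at this
          linarith
    _ < 1 := by linarith
  have hroot : z₀ ^ 2 - z₀ + t = 0 := by
    rw [hz₀]; linear_combination hw2 / 4
  have hgz0 : g z₀ = 0 := by
    have := hEq hz0mem
    simp only at this
    rw [hroot] at this
    exact pow_eq_zero_iff (by norm_num) |>.mp this
  -- derivative contradiction
  have hdg : HasDerivAt g (deriv g z₀) z₀ := (hgan z₀ hz0mem).differentiableAt.hasDerivAt
  have hd1 : HasDerivAt (fun z => g z ^ 2) ((2:ℕ) * g z₀ ^ 1 * deriv g z₀) z₀ := hdg.pow 2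
  have hd2 : HasDerivAt (fun z : ℂ => z ^ 2 - z + t) ((2:ℕ) * z₀ ^ 1 - 1) z₀ :=
    ((hasDerivAt_pow 2 z₀).sub (hasDerivAt_id z₀)).add_const t
  have heqd : (fun z : ℂ => z ^ 2 - z + t) =ᶠ[nhds z₀] (fun z => g z ^ 2) :=
    (hEq.symm.eventuallyEq_of_mem (isOpen_ball.mem_nhds hz0mem))
  have := (hd1.congr_of_eventuallyEq heqd).unique hd2
  rw [hgz0] at this
  simp only [pow_one] at this
  have hw0 : w = 0 := by
    rw [hz₀] at this
    field_simp at this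
    linear_combination this / 2
  rw [hw0] at hw2
  simp at hw2
  exact hu0 hw2.symm

lemma coeff_contOn {ε : ℝ} (hε0 : 0 < ε) (hε4 : ε ≤ 1/4) (n : ℕ) :
    ContinuousOn
      (fun t : ℂ => iteratedDeriv n (fun z : ℂ => (z ^ 2 - z + t) ^ ((1:ℂ)/2)) 0
        / ((n.factorial : ℕ) : ℂ))
      {t : ℂ | ε/2 < t.re} := by
  set δ : NNReal := ⟨ε/8, by positivity⟩ with hδ
  have hδ0 : 0 < (δ : ℝ) := by show (0:ℝ) < ε/8; positivity
  set V : Set ℂ := {t : ℂ | ε/2 < t.re} with hV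
  set F : ℂ → ℂ → ℂ := fun t z => (z ^ 2 - z + t) ^ ((1:ℂ)/2) with hF
  have hfac : ((n.factorial : ℕ) : ℂ) ≠ 0 := Nat.cast_ne_zero.mpr n.factorial_ne_zero
  -- the Cauchy integral representation
  have hrep : ∀ t ∈ V, iteratedDeriv n (F t) 0 / ((n.factorial : ℕ) : ℂ)
      = (2 * Real.pi * I : ℂ)⁻¹ • ∮ z in C(0, (δ:ℝ)), ((1:ℂ) / (z - 0)) ^ n • (z - 0)⁻¹ • F t z := by
    intro t ht
    have hd : DifferentiableOn ℂ (F t) (closedBall 0 (δ:ℝ)) := by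
      intro z hz
      have hz' : ‖z‖ ≤ ε/8 := by
        exact mem_closedBall_zero_iff.mp hz
      exact (analyticAt_sq2 (slit_pos' hε0 ht hz' hε4)).differentiableAt.differentiableWithinAt
    have hps : HasFPowerSeriesOnBall (F t) (cauchyPowerSeries (F t) 0 (δ:ℝ)) 0 (δ : ENNReal) :=
      hd.hasFPowerSeriesOnBall (by exact_mod_cast hδ0)
    have h1 := hps.factorial_smul (y := (1:ℂ)) n
    have h2 : iteratedDeriv n (F t) 0 = ((n.factorial : ℕ) : ℂ) • (cauchyPowerSeries (F t) 0 (δ:ℝ) n fun _ => (1:ℂ)) := by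
      rw [iteratedDeriv_eq_iteratedFDeriv, ← h1]
      simp [Nat.cast_smul_eq_nsmul]
    rw [h2, smul_eq_mul, mul_div_cancel_left₀ _ hfac]
    exact cauchyPowerSeries_apply (F t) 0 (δ:ℝ) n 1
  apply ContinuousOn.congr _ hrep
  -- continuity of the integral representation
  rw [continuousOn_iff_continuous_restrict]
  show Continuous fun (t : V) => (2 * Real.pi * I : ℂ)⁻¹ •
    ∫ θ in (0:ℝ)..2 * Real.pi, deriv (circleMap 0 (δ:ℝ)) θ •
      (((1:ℂ) / (circleMap 0 (δ:ℝ) θ - 0)) ^ n • (circleMap 0 (δ:ℝ) θ - 0)⁻¹ • F (t : ℂ) (circleMap 0 (δ:ℝ) θ))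
  apply Continuous.fun_const_smul
  apply intervalIntegral.continuous_parametric_intervalIntegral_of_continuous'
  -- joint continuity of the integrand
  have hcm : Continuous fun p : V × ℝ => circleMap 0 (δ:ℝ) p.2 :=
    (continuous_circleMap 0 (δ:ℝ)).comp continuous_snd
  have hcm0 : ∀ p : V × ℝ, circleMap 0 (δ:ℝ) p.2 ≠ 0 := fun p => circleMap_ne_center hδ0.ne'
  have hFcont : Continuous fun p : V × ℝ => F (p.1 : ℂ) (circleMap 0 (δ:ℝ) p.2) := by
    rw [continuous_iff_continuousAt]
    intro p
    have hbase : Continuous (fun p : V × ℝ =>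
        (circleMap 0 (δ:ℝ) p.2) ^ 2 - circleMap 0 (δ:ℝ) p.2 + (p.1 : ℂ)) :=
      ((hcm.pow 2).sub hcm).add (continuous_subtype_val.comp continuous_fst)
    have hpos : 0 < ((circleMap 0 (δ:ℝ) p.2) ^ 2 - circleMap 0 (δ:ℝ) p.2 + (p.1 : ℂ)).re := by
      apply slit_pos' hε0 p.1.2
      · rw [norm_circleMap_zero, abs_of_pos hδ0]; exact le_rfl
      · exact hε4
    exact ContinuousAt.comp (g := fun w : ℂ => w ^ ((1:ℂ)/2))
      (f := fun p : ↥V × ℝ => circleMap 0 (δ:ℝ) p.2 ^ 2 - circleMap 0 (δ:ℝ) p.2 + (p.1 : ℂ))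
      (continuousAt_cpow_const (Complex.mem_slitPlane_iff.mpr (Or.inl hpos)))
      hbase.continuousAt
  have hderiv : Continuous fun p : V × ℝ => deriv (circleMap 0 (δ:ℝ)) p.2 := by
    simp only [deriv_circleMap]
    exact hcm.mul continuous_const
  have h1 : Continuous fun p : V × ℝ => ((1:ℂ) / (circleMap 0 (δ:ℝ) p.2 - 0)) ^ n := by
    simp only [sub_zero, one_div]
    exact (hcm.inv₀ hcm0).pow n
  have h2 : Continuous fun p : V × ℝ => (circleMap 0 (δ:ℝ) p.2 - 0)⁻¹ := by
    simp only [sub_zero]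
    exact hcm.inv₀ hcm0
  exact hderiv.smul ((h1.smul (h2.smul hFcont)))

open Filter ContinuousLinearMap

theorem taylor_coeff_sqrt_blowup (r : ℝ) (hr0 : 0 < r) (hr : r < 1 / 4)
    (M : ℝ) (hM : 0 < M) :
    ∃ N : ℕ, 0 < N ∧
      ∀ t : ℂ, ‖t - 1 / 4‖ = r →
        ∃ n : ℕ, 1 ≤ n ∧ n ≤ N ∧
          M < ‖
            (iteratedDeriv n (fun z : ℂ => (z ^ 2 - z + t) ^ ((1 : ℂ) / 2)) 0 / ((Nat.factorial n : ℕ) : ℂ))‖ := by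
  by_contra hcon
  push_neg at hcon
  set c : ℕ → ℂ → ℂ := fun n t =>
    iteratedDeriv n (fun z : ℂ => (z ^ 2 - z + t) ^ ((1:ℂ)/2)) 0 / ((n.factorial : ℕ) : ℂ) with hc
  have hsel : ∀ N : ℕ, ∃ t : ℂ, ‖t - 1/4‖ = r ∧
      ∀ n : ℕ, 1 ≤ n → n ≤ N + 1 → ‖c n t‖ ≤ M := by
    intro N
    obtain ⟨t, ht1, ht2⟩ := hcon (N + 1) (Nat.succ_pos N)
    exact ⟨t, ht1, fun n hn1 hn2 => ht2 n hn1 hn2⟩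
  choose T hT1 hT2 using hsel
  have hTs : ∀ N, T N ∈ Metric.sphere ((1:ℂ)/4) r := by
    intro N
    rw [mem_sphere_iff_norm]
    exact hT1 N
  obtain ⟨tL, htLs, φ, hφ, hlim⟩ := (isCompact_sphere ((1:ℂ)/4) r).tendsto_subseq hTs
  have htL : ‖tL - 1/4‖ = r := by
    rw [mem_sphere_iff_norm] at htLs
    exact htLs
  set ε : ℝ := 1/4 - r with hε
  have hε0 : 0 < ε := by rw [hε]; linarith
  have hε4 : ε ≤ 1/4 := by rw [hε]; linarith
  have hVopen : IsOpen {t : ℂ | ε/2 < t.re} := isOpen_lt continuous_const Complex.continuous_re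
  have hmemV : ∀ t : ℂ, ‖t - 1/4‖ = r → t ∈ {t : ℂ | ε/2 < t.re} := by
    intro t ht
    have h1 : -‖t - 1/4‖ ≤ (t - 1/4).re := neg_le_of_abs_le (Complex.abs_re_le_norm _)
    have h2 : (t - 1/4).re = t.re - 1/4 := by simp
    rw [ht, h2] at h1
    show ε/2 < t.re
    rw [hε]; linarith
  apply not_all_small hr0 hr htL M
  intro n hn1
  have hcont : ContinuousAt (c n) tL :=
    (coeff_contOn hε0 hε4 n).continuousAt (hVopen.mem_nhds (hmemV tL htL))
  have hlim2 : Tendsto (fun N => ‖c n (T (φ N))‖) atTop (nhds ‖c n tL‖) :=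
    (continuous_norm.continuousAt.comp hcont).tendsto.comp hlim
  apply le_of_tendsto hlim2
  filter_upwards [eventually_ge_atTop n] with N hN
  exact hT2 (φ N) n hn1 (le_trans (le_trans hN (hφ.le_apply)) (Nat.le_succ _))
end
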